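/- arXiv:1106.4287 — 3 statements merged into one kernel-verified Lean document; each statement's English description precedes it below -/
import Mathlib

section
/- Let P be a natural unit interval order on [n], let E = |E(inc(P))|, and fix N ≥ 1. Write X_{inc(P)}(x_1,…,x_N;t) = Σ_{j=0}^{E} X_j(x_1,…,x_N) t^j. Then X_{inc(P)}(x_1,…,x_N;t) is palindromic as a polynomial in t: X_j = X_{E−j} in ℤ[x_1,…,x_N] for all 0 ≤ j ≤ E. -/
open scoped Classical

/-- Two elements are incomparable with respect to a strict order relation `lt`. -/
def Incomp {n : ℕ} (lt : Fin n → Fin n → Prop) (a b : Fin n) : Prop :=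
  a ≠ b ∧ ¬ lt a b ∧ ¬ lt b a

/-- A natural unit interval order on `[n]` (modeled on `Fin n`): a strict partial order
`lt` such that (i) `x <_P y` implies `x < y` in the natural order, and (ii) whenever
`x <_P z` and `y` is `P`-incomparable to both `x` and `z`, then `x < y < z` in the
natural order.  (Irreflexivity and asymmetry follow from condition (i).) -/
structure NUIO (n : ℕ) where
  lt : Fin n → Fin n → Prop
  trans : ∀ a b c, lt a b → lt b c → lt a c
  natural : ∀ a b, lt a b → (a : ℕ) < (b : ℕ)
  unit : ∀ x y z, lt x z → Incomp lt x y → Incomp lt y z →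
    (x : ℕ) < (y : ℕ) ∧ (y : ℕ) < (z : ℕ)

/-- `inv_G(σ)` where `G` is the incomparability graph of the relation `lt`:
the number of pairs `i < j` with `σ(i) > σ(j)` and `{σ(i), σ(j)}` an edge of `G`. -/
noncomputable def invInc {n : ℕ} (lt : Fin n → Fin n → Prop) (σ : Equiv.Perm (Fin n)) : ℕ :=
  (Finset.univ.filter fun p : Fin n × Fin n =>
    p.1 < p.2 ∧ (σ p.2 : ℕ) < (σ p.1 : ℕ) ∧ Incomp lt (σ p.1) (σ p.2)).card

/-- `maj_P(σ)`: the sum of the (1-based) positions `i` with `σ(i) >_P σ(i+1)`. -/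
noncomputable def majP {n : ℕ} (lt : Fin n → Fin n → Prop) (σ : Equiv.Perm (Fin n)) : ℕ :=
  ∑ j ∈ Finset.range n,
    if h : j + 1 < n then
      (if lt (σ ⟨j + 1, h⟩) (σ ⟨j, Nat.lt_of_succ_lt h⟩) then j + 1 else 0)
    else 0

/-- The number of edges of the incomparability graph of the relation `lt`. -/
noncomputable def numIncEdges {n : ℕ} (lt : Fin n → Fin n → Prop) : ℕ :=
  (Finset.univ.filter fun p : Fin n × Fin n => p.1 < p.2 ∧ Incomp lt p.1 p.2).card

/-- The ascent number of a coloring `c` of the incomparability graph of `lt`: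
the number of edges `{i,j}` with `i < j` and `c i < c j`. -/
noncomputable def ascC {n N : ℕ} (lt : Fin n → Fin n → Prop) (c : Fin n → Fin N) : ℕ :=
  (Finset.univ.filter fun p : Fin n × Fin n =>
    p.1 < p.2 ∧ Incomp lt p.1 p.2 ∧ (c p.1 : ℕ) < (c p.2 : ℕ)).card

/-- The chromatic quasisymmetric polynomial `X_G(x_1,…,x_N;t)` of the incomparability
graph `G` of `lt`, as a polynomial in `t` over `ℤ[x_1,…,x_N]`. -/
noncomputable def chromIncQSym (N n : ℕ) (lt : Fin n → Fin n → Prop) :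
    Polynomial (MvPolynomial (Fin N) ℤ) :=
  ∑ c ∈ Finset.univ.filter (fun c : Fin n → Fin N =>
      ∀ a b : Fin n, Incomp lt a b → c a ≠ c b),
    Polynomial.X ^ ascC lt c * Polynomial.C (∏ i, MvPolynomial.X (c i))


namespace Palin
open Finset


variable {n N : ℕ}

lemma incomp_symm {lt : Fin n → Fin n → Prop} {u v : Fin n} (h : Incomp lt u v) :
    Incomp lt v u := ⟨h.1.symm, h.2.2, h.2.1⟩

lemma sandwich (P : NUIO n) {x y z : Fin n} (hxy : x < y) (hyz : y < z)
    (h : Incomp P.lt x z) : Incomp P.lt x y ∧ Incomp P.lt y z := by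
  have hxy' : (x:ℕ) < y := hxy
  have hyz' : (y:ℕ) < z := hyz
  have hyx : ¬ P.lt y x := fun hl => absurd (P.natural _ _ hl) (by omega)
  have hzy : ¬ P.lt z y := fun hl => absurd (P.natural _ _ hl) (by omega)
  have hxy0 : ¬ P.lt x y := by
    intro hl
    have hyz2 : Incomp P.lt y z :=
      ⟨fun he => absurd (he ▸ hyz') (by omega), fun h2 => h.2.1 (P.trans _ _ _ hl h2), hzy⟩
    have := P.unit x z y hl h (incomp_symm hyz2)
    omega
  have hxy2 : Incomp P.lt x y := ⟨ne_of_lt hxy, hxy0, hyx⟩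
  refine ⟨hxy2, fun he => absurd (he ▸ hyz') (by omega), ?_, hzy⟩
  intro hl
  have := P.unit y x z hl (incomp_symm hxy2) h
  omega

/-! ### sorted enumeration of a finset of `Fin n` -/

noncomputable def en (s : Finset (Fin n)) (d : Fin n) (i : ℕ) : Fin n :=
  (s.sort (· ≤ ·)).getD i d

noncomputable def idx (s : Finset (Fin n)) (x : Fin n) : ℕ :=
  (s.sort (· ≤ ·)).idxOf x

lemma idx_lt_card {s : Finset (Fin n)} {x : Fin n} (hx : x ∈ s) : idx s x < s.card := by
  have := List.idxOf_lt_length_iff.2 ((Finset.mem_sort (α := Fin n) (· ≤ ·)).2 hx)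
  simpa [idx, Finset.length_sort] using this

lemma en_eq_getElem {s : Finset (Fin n)} {i : ℕ} (h : i < s.card) (d : Fin n) :
    en s d i = (s.sort (· ≤ ·))[i]'(by simpa [Finset.length_sort] using h) := by
  have h' : i < (s.sort (· ≤ ·)).length := by simpa [Finset.length_sort] using h
  simp [en, List.getD_eq_getElem?_getD, List.getElem?_eq_getElem h']

lemma en_default_irrel {s : Finset (Fin n)} {i : ℕ} (h : i < s.card) (d d' : Fin n) :
    en s d i = en s d' i := by
  rw [en_eq_getElem h, en_eq_getElem h]

lemma en_idx_self {s : Finset (Fin n)} {x : Fin n} (hx : x ∈ s) (d : Fin n) :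
    en s d (idx s x) = x := by
  have hmem : x ∈ s.sort (· ≤ ·) := (Finset.mem_sort (α := Fin n) (· ≤ ·)).2 hx
  have h' : idx s x < (s.sort (· ≤ ·)).length := List.idxOf_lt_length_iff.2 hmem
  rw [en_eq_getElem (by simpa [Finset.length_sort] using h')]
  exact List.getElem_idxOf h' 

lemma en_mem {s : Finset (Fin n)} {i : ℕ} (h : i < s.card) (d : Fin n) : en s d i ∈ s := by
  have h' : i < (s.sort (· ≤ ·)).length := by simpa [Finset.length_sort] using h
  have : en s d i ∈ s.sort (· ≤ ·) := by
    rw [en_eq_getElem h]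
    exact List.getElem_mem _
  exact (Finset.mem_sort (α := Fin n) (· ≤ ·)).1 this

lemma en_strictMono {s : Finset (Fin n)} {i j : ℕ} (hij : i < j) (hj : j < s.card)
    (d : Fin n) : en s d i < en s d j := by
  have hi' : i < (s.sort (· ≤ ·)).length := by simp [Finset.length_sort]; omega
  have hj' : j < (s.sort (· ≤ ·)).length := by simpa [Finset.length_sort] using hj
  have hs := (Finset.sortedLT_sort s).pairwise
  have := List.pairwise_iff_get.1 hs ⟨i, hi'⟩ ⟨j, hj'⟩ (by simpa using hij)
  rw [en_eq_getElem (by simpa [Finset.length_sort] using hi'), en_eq_getElem hj]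
  simpa [List.get_eq_getElem] using this

lemma idx_en {s : Finset (Fin n)} {i : ℕ} (h : i < s.card) (d : Fin n) :
    idx s (en s d i) = i := by
  have hmem := en_mem h d
  have h1 : idx s (en s d i) < s.card := idx_lt_card hmem
  have h2 : en s d (idx s (en s d i)) = en s d i := en_idx_self hmem d
  rcases lt_trichotomy (idx s (en s d i)) i with hlt | heq | hgt
  · exact absurd h2 (ne_of_lt (en_strictMono hlt h d))
  · exact heq
  · exact absurd h2.symm (ne_of_lt (en_strictMono hgt h1 d))

end Palin

section BKsec
open Finset
namespace Palin
variable {n N : ℕ}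

variable (P : NUIO n) (a b : Fin N) (c : Fin n → Fin N)

def inV (u : Fin n) : Prop := c u = a ∨ c u = b

def Stp (u v : Fin n) : Prop := Incomp P.lt u v ∧ inV a b c u ∧ inV a b c v

def Rch : Fin n → Fin n → Prop := Relation.ReflTransGen (Stp P a b c)

noncomputable def comp (u : Fin n) : Finset (Fin n) := univ.filter (Rch P a b c u)

noncomputable def BKmap : Fin n → Fin N :=
  fun u => if (comp P a b c u).card % 2 = 1 then Equiv.swap a b (c u) else c u

variable {P a b c}

lemma inV_def {u : Fin n} : inV a b c u ↔ (c u = a ∨ c u = b) := Iff.rfl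

lemma stp_symm {u v : Fin n} (h : Stp P a b c u v) : Stp P a b c v u :=
  ⟨incomp_symm h.1, h.2.2, h.2.1⟩

lemma rch_symm {u v : Fin n} (h : Rch P a b c u v) : Rch P a b c v u :=
  by
  unfold Rch at h ⊢
  induction h with
  | refl => exact Relation.ReflTransGen.refl
  | tail _ hst ih => exact ih.head (stp_symm hst)

lemma mem_comp {u v : Fin n} : v ∈ comp P a b c u ↔ Rch P a b c u v := by
  simp [comp]

lemma mem_comp_self (u : Fin n) : u ∈ comp P a b c u :=
  mem_comp.2 Relation.ReflTransGen.refl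

lemma comp_eq_of_rch {u v : Fin n} (h : Rch P a b c u v) :
    comp P a b c u = comp P a b c v := by
  ext w
  simp only [mem_comp]
  exact ⟨fun h2 => Relation.ReflTransGen.trans (rch_symm h) h2,
    fun h2 => Relation.ReflTransGen.trans h h2⟩

lemma inV_of_rch {u v : Fin n} (hu : inV a b c u) (h : Rch P a b c u v) :
    inV a b c v := by
  induction h with
  | refl => exact hu
  | tail _ hst ih => exact hst.2.2

lemma a_ne_b (hab : (b:ℕ) = (a:ℕ) + 1) : a ≠ b := by
  intro h; rw [h] at hab; omega

variable (hab : (b:ℕ) = (a:ℕ) + 1)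
  (hc : ∀ u v : Fin n, Incomp P.lt u v → c u ≠ c v)
include hab hc

lemma no_between {u v z : Fin n} (h : Stp P a b c u v) (huv : u < v)
    (hz : inV a b c z) : ¬ (u < z ∧ z < v) := by
  rintro ⟨h1, h2⟩
  obtain ⟨hi1, hi2⟩ := sandwich P h1 h2 h.1
  have d1 := hc _ _ hi1
  have d2 := hc _ _ hi2
  have d3 := hc _ _ h.1
  have hne := a_ne_b hab
  have hu := inV_def.1 h.2.1
  have hv := inV_def.1 h.2.2
  have hz' := inV_def.1 hz
  rcases hu with hu | hu <;> rcases hv with hv | hv <;> rcases hz' with hz' | hz' <;>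
    simp_all

lemma int_lemma {x w : Fin n} (h : Rch P a b c x w) :
    ∀ z, inV a b c z → x ≤ z → z ≤ w → Rch P a b c x z := by
  induction h with
  | refl => exact fun z _ h1 h2 => le_antisymm h2 h1 ▸ Relation.ReflTransGen.refl
  | @tail p q hpq hst ih =>
    intro z hz h1 h2
    by_cases hzp : z ≤ p
    · exact ih z hz h1 hzp
    · push_neg at hzp
      rcases eq_or_lt_of_le h2 with rfl | hzq
      · exact hpq.tail hst
      · exact absurd ⟨hzp, hzq⟩ (no_between hab hc hst (lt_of_lt_of_le hzp h2) hz)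

lemma cross_lemma {u w x y : Fin n} (h : Rch P a b c u w) (hx : inV a b c x)
    (hy : inV a b c y) (hxy : x < y)
    (hb : ∀ z, inV a b c z → ¬ (x < z ∧ z < y)) (hux : u ≤ x) :
    y ≤ w → Stp P a b c x y := by
  induction h with
  | refl => exact fun hyu => absurd (lt_of_lt_of_le hxy (le_trans hyu hux)) (lt_irrefl x)
  | @tail p q hpq hst ih =>
    intro hyq
    by_cases hyp : y ≤ p
    · exact ih hyp
    · push_neg at hyp
      have hpV : inV a b c p := hst.2.1
      have hqV : inV a b c q := hst.2.2
      have hpq' : p < q := lt_of_lt_of_le hyp hyq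
      have hpx : p ≤ x := by
        by_contra hcon
        push_neg at hcon
        exact hb p hpV ⟨hcon, hyp⟩
      have hpx' : p = x := by
        rcases eq_or_lt_of_le hpx with h' | h'
        · exact h'
        · exact absurd ⟨h', lt_of_lt_of_le hxy hyq⟩ (no_between hab hc hst hpq' hx)
      subst hpx'
      have hqy : q = y := by
        rcases eq_or_lt_of_le hyq with h' | h'
        · exact h'.symm
        · exact absurd ⟨hxy, h'⟩ (no_between hab hc hst hpq' hy)
      subst hqy
      exact hst

end Palin
end BKsec

section BKsec2
open Finset
namespace Palin
variable {n N : ℕ} {P : NUIO n} {a b : Fin N} {c : Fin n → Fin N}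

lemma not_between_en {s : Finset (Fin n)} {z d : Fin n} {i : ℕ} (hz : z ∈ s)
    (hi : i + 1 < s.card) (h1 : en s d i < z) (h2 : z < en s d (i + 1)) : False := by
  have e := en_idx_self hz d
  have hlt := idx_lt_card hz
  rcases lt_trichotomy (idx s z) i with h | h | h
  · have := en_strictMono (s := s) h (by omega : i < s.card) d
    rw [e] at this
    exact lt_asymm h1 this
  · rw [h] at e
    exact lt_irrefl _ (e ▸ h1)
  · rcases eq_or_lt_of_le (Nat.succ_le_of_lt h) with h' | h'
    · rw [← h'] at e
      exact lt_irrefl _ (e ▸ h2)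
    · have := en_strictMono (s := s) h' hlt d
      rw [e] at this
      exact lt_asymm h2 this

def pairIdx (e : ℕ) : ℕ := if e % 2 = 0 then e + 1 else e - 1

lemma pair_pair (e : ℕ) : pairIdx (pairIdx e) = e := by
  unfold pairIdx; split <;> split <;> omega

lemma pair_lt {e m : ℕ} (h : e < m) (hm : m % 2 = 0) : pairIdx e < m := by
  unfold pairIdx; split <;> omega

lemma pair_cases (e : ℕ) : pairIdx e = e + 1 ∨ (e = pairIdx e + 1) := by
  unfold pairIdx; split <;> omega

variable (hab : (b:ℕ) = (a:ℕ) + 1)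
  (hc : ∀ u v : Fin n, Incomp P.lt u v → c u ≠ c v)
include hab hc

lemma adj_step {u : Fin n} (hu : inV a b c u) {i : ℕ}
    (hi : i + 1 < (comp P a b c u).card) :
    Stp P a b c (en (comp P a b c u) u i) (en (comp P a b c u) u (i + 1)) := by
  set s := comp P a b c u with hs
  have hx : en s u i ∈ s := en_mem (by omega) u
  have hy : en s u (i + 1) ∈ s := en_mem hi u
  have Rux : Rch P a b c u (en s u i) := mem_comp.1 hx
  have Ruy : Rch P a b c u (en s u (i + 1)) := mem_comp.1 hy
  have hxV : inV a b c (en s u i) := inV_of_rch hu Rux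
  have hyV : inV a b c (en s u (i + 1)) := inV_of_rch hu Ruy
  have hxy : en s u i < en s u (i + 1) := en_strictMono (by omega) hi u
  have Rxy : Rch P a b c (en s u i) (en s u (i + 1)) :=
    Relation.ReflTransGen.trans (rch_symm Rux) Ruy
  refine cross_lemma hab hc Rxy hxV hyV hxy ?_ le_rfl le_rfl
  intro z hzV ⟨h1, h2⟩
  have Rxz : Rch P a b c (en s u i) z :=
    int_lemma hab hc Rxy z hzV (le_of_lt h1) (le_of_lt h2)
  have hzs : z ∈ s := mem_comp.2 (Relation.ReflTransGen.trans Rux Rxz)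
  exact not_between_en hzs hi h1 h2

lemma idx_succ {x y : Fin n} (hst : Stp P a b c x y) (hxy : x < y) :
    idx (comp P a b c x) y = idx (comp P a b c x) x + 1 := by
  set s := comp P a b c x with hs
  have hxs : x ∈ s := mem_comp_self x
  have hys : y ∈ s := mem_comp.2 (Relation.ReflTransGen.single hst)
  have he := idx_lt_card hxs
  have hf := idx_lt_card hys
  have hex : en s x (idx s x) = x := en_idx_self hxs x
  have hey : en s x (idx s y) = y := en_idx_self hys x
  have hef : idx s x < idx s y := by
    rcases lt_trichotomy (idx s x) (idx s y) with h | h | h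
    · exact h
    · rw [h, hey] at hex; exact absurd hex (ne_of_gt hxy)
    · have := en_strictMono h he x
      rw [hex, hey] at this
      exact absurd hxy (lt_asymm this)
  rcases eq_or_lt_of_le (Nat.succ_le_of_lt hef) with h' | h'
  · omega
  · exfalso
    have h1 : idx s x + 1 < s.card := by omega
    have hz : en s x (idx s x + 1) ∈ s := en_mem h1 x
    have hzV : inV a b c (en s x (idx s x + 1)) := inV_of_rch hst.2.1 (mem_comp.1 hz)
    refine no_between hab hc hst hxy hzV ⟨?_, ?_⟩
    · conv_lhs => rw [← hex]
      exact en_strictMono (by omega) h1 x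
    · conv_rhs => rw [← hey]
      exact en_strictMono h' hf x

lemma color_opp {x y : Fin n} (hst : Stp P a b c x y) :
    (c x = a ∧ c y = b) ∨ (c x = b ∧ c y = a) := by
  have hne := hc _ _ hst.1
  have h1 := inV_def.1 hst.2.1
  have h2 := inV_def.1 hst.2.2
  rcases h1 with h1 | h1 <;> rcases h2 with h2 | h2 <;> simp_all

lemma theta_adj {u : Fin n} (hu : inV a b c u)
    (hpar : (comp P a b c u).card % 2 = 0) :
    Stp P a b c u (en (comp P a b c u) u (pairIdx (idx (comp P a b c u) u))) ∧
    en (comp P a b c (en (comp P a b c u) u (pairIdx (idx (comp P a b c u) u))))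
      (en (comp P a b c u) u (pairIdx (idx (comp P a b c u) u)))
      (pairIdx (idx (comp P a b c (en (comp P a b c u) u (pairIdx (idx (comp P a b c u) u))))
        (en (comp P a b c u) u (pairIdx (idx (comp P a b c u) u))))) = u := by
  have hus : u ∈ comp P a b c u := mem_comp_self u
  have he : idx (comp P a b c u) u < (comp P a b c u).card := idx_lt_card hus
  have hf : pairIdx (idx (comp P a b c u) u) < (comp P a b c u).card := pair_lt he hpar
  have hstp : Stp P a b c u (en (comp P a b c u) u (pairIdx (idx (comp P a b c u) u))) := by
    rcases pair_cases (idx (comp P a b c u) u) with h | h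
    · have h2 := adj_step hab hc hu (i := idx (comp P a b c u) u) (by omega)
      rw [en_idx_self hus u] at h2
      rwa [← h] at h2
    · have h2 := adj_step hab hc hu (i := pairIdx (idx (comp P a b c u) u)) (by omega)
      rw [← h, en_idx_self hus u] at h2
      exact stp_symm h2
  refine ⟨hstp, ?_⟩
  have hcomp : comp P a b c (en (comp P a b c u) u (pairIdx (idx (comp P a b c u) u)))
      = comp P a b c u :=
    (comp_eq_of_rch (Relation.ReflTransGen.single hstp)).symm
  rw [hcomp, idx_en hf u, pair_pair,
    en_default_irrel he (en (comp P a b c u) u (pairIdx (idx (comp P a b c u) u))) u,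
    en_idx_self hus u]

end Palin
end BKsec2

section BKsec3
open Finset
namespace Palin
variable {n N : ℕ} {P : NUIO n} {a b : Fin N} {c : Fin n → Fin N}

lemma pair_lt_edge {e m : ℕ} (h : e + 1 < m) (hm : m % 2 = 1) : pairIdx e + 1 < m := by
  unfold pairIdx; split <;> omega

variable (hab : (b:ℕ) = (a:ℕ) + 1)
  (hc : ∀ u v : Fin n, Incomp P.lt u v → c u ≠ c v)
include hab hc

lemma two_colors {u w z : Fin n} (hu : inV a b c u) (hw : inV a b c w)
    (hz : inV a b c z) (h1 : c u ≠ c w) (h2 : c z ≠ c u) : c z = c w := by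
  have := a_ne_b hab
  rcases inV_def.1 hu with h3 | h3 <;> rcases inV_def.1 hw with h4 | h4 <;>
    rcases inV_def.1 hz with h5 | h5 <;> simp_all

lemma E1 : ((univ : Finset (Fin n)).filter
      fun u => c u = a ∧ (comp P a b c u).card % 2 = 0).card
    = ((univ : Finset (Fin n)).filter
      fun u => c u = b ∧ (comp P a b c u).card % 2 = 0).card := by
  refine Finset.card_bij'
    (fun u _ => en (comp P a b c u) u (pairIdx (idx (comp P a b c u) u)))
    (fun u _ => en (comp P a b c u) u (pairIdx (idx (comp P a b c u) u))) ?_ ?_ ?_ ?_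
  · intro u hu0
    rw [Finset.mem_filter] at hu0 ⊢
    obtain ⟨-, hca, hpar⟩ := hu0
    obtain ⟨hT1, -⟩ := theta_adj hab hc (Or.inl hca) hpar
    have hcomp := (comp_eq_of_rch (Relation.ReflTransGen.single hT1)).symm
    refine ⟨Finset.mem_univ _, ?_, by rw [hcomp]; exact hpar⟩
    rcases color_opp hab hc hT1 with ⟨-, h2⟩ | ⟨h1, -⟩
    · exact h2
    · exact absurd (hca.symm.trans h1) (a_ne_b hab)
  · intro u hu0
    rw [Finset.mem_filter] at hu0 ⊢
    obtain ⟨-, hcb, hpar⟩ := hu0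
    obtain ⟨hT1, -⟩ := theta_adj hab hc (Or.inr hcb) hpar
    have hcomp := (comp_eq_of_rch (Relation.ReflTransGen.single hT1)).symm
    refine ⟨Finset.mem_univ _, ?_, by rw [hcomp]; exact hpar⟩
    rcases color_opp hab hc hT1 with ⟨h1, -⟩ | ⟨-, h2⟩
    · exact absurd (h1.symm.trans hcb) (a_ne_b hab)
    · exact h2
  · intro u hu0
    rw [Finset.mem_filter] at hu0
    exact (theta_adj hab hc (Or.inl hu0.2.1) hu0.2.2).2
  · intro u hu0
    rw [Finset.mem_filter] at hu0
    exact (theta_adj hab hc (Or.inr hu0.2.1) hu0.2.2).2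

lemma theta2_adj {x y : Fin n} (hst : Stp P a b c x y) (hxy : x < y)
    (hodd : (comp P a b c x).card % 2 = 1) :
    Stp P a b c (en (comp P a b c x) x (pairIdx (idx (comp P a b c x) x)))
        (en (comp P a b c x) x (pairIdx (idx (comp P a b c x) x) + 1)) ∧
      en (comp P a b c x) x (pairIdx (idx (comp P a b c x) x)) <
        en (comp P a b c x) x (pairIdx (idx (comp P a b c x) x) + 1) ∧
      comp P a b c (en (comp P a b c x) x (pairIdx (idx (comp P a b c x) x)))
        = comp P a b c x ∧
      c (en (comp P a b c x) x (pairIdx (idx (comp P a b c x) x))) = c y ∧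
      c (en (comp P a b c x) x (pairIdx (idx (comp P a b c x) x) + 1)) = c x ∧
      en (comp P a b c (en (comp P a b c x) x (pairIdx (idx (comp P a b c x) x))))
        (en (comp P a b c x) x (pairIdx (idx (comp P a b c x) x)))
        (pairIdx (idx (comp P a b c (en (comp P a b c x) x (pairIdx (idx (comp P a b c x) x))))
          (en (comp P a b c x) x (pairIdx (idx (comp P a b c x) x))))) = x ∧
      en (comp P a b c (en (comp P a b c x) x (pairIdx (idx (comp P a b c x) x))))
        (en (comp P a b c x) x (pairIdx (idx (comp P a b c x) x)))
        (pairIdx (idx (comp P a b c (en (comp P a b c x) x (pairIdx (idx (comp P a b c x) x))))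
          (en (comp P a b c x) x (pairIdx (idx (comp P a b c x) x)))) + 1) = y := by
  have hu : inV a b c x := hst.2.1
  have hxs : x ∈ comp P a b c x := mem_comp_self x
  have hys : y ∈ comp P a b c x := mem_comp.2 (Relation.ReflTransGen.single hst)
  have hiy : idx (comp P a b c x) y = idx (comp P a b c x) x + 1 := idx_succ hab hc hst hxy
  have he : idx (comp P a b c x) x < (comp P a b c x).card := idx_lt_card hxs
  have hey : idx (comp P a b c x) x + 1 < (comp P a b c x).card := hiy ▸ idx_lt_card hys
  have hf1 : pairIdx (idx (comp P a b c x) x) + 1 < (comp P a b c x).card :=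
    pair_lt_edge hey hodd
  have hS : Stp P a b c (en (comp P a b c x) x (pairIdx (idx (comp P a b c x) x)))
      (en (comp P a b c x) x (pairIdx (idx (comp P a b c x) x) + 1)) :=
    adj_step hab hc hu hf1
  have hq1s : en (comp P a b c x) x (pairIdx (idx (comp P a b c x) x)) ∈ comp P a b c x :=
    en_mem (by omega) x
  have hcomp : comp P a b c (en (comp P a b c x) x (pairIdx (idx (comp P a b c x) x)))
      = comp P a b c x := (comp_eq_of_rch (mem_comp.1 hq1s)).symm
  have hcxy : c x ≠ c y := hc _ _ hst.1
  have hcolors : c (en (comp P a b c x) x (pairIdx (idx (comp P a b c x) x))) = c y ∧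
      c (en (comp P a b c x) x (pairIdx (idx (comp P a b c x) x) + 1)) = c x := by
    rcases pair_cases (idx (comp P a b c x) x) with h | h
    · -- q1 = en (e+1) = y
      have hq1 : en (comp P a b c x) x (pairIdx (idx (comp P a b c x) x)) = y := by
        rw [h, ← hiy, en_idx_self hys x]
      constructor
      · rw [hq1]
      · have hne := hc _ _ hS.1
        rw [hq1] at hne
        exact two_colors hab hc hst.2.2 hu hS.2.2 hcxy.symm hne.symm
    · -- q2 = en (f+1) = en e = x
      have hq2 : en (comp P a b c x) x (pairIdx (idx (comp P a b c x) x) + 1) = x := by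
        rw [← h, en_idx_self hxs x]
      constructor
      · have hne := hc _ _ hS.1
        rw [hq2] at hne
        exact two_colors hab hc hu hst.2.2 hS.2.1 hcxy hne
      · rw [hq2]
  refine ⟨hS, en_strictMono (by omega) hf1 x, hcomp, hcolors.1, hcolors.2, ?_, ?_⟩
  · rw [hcomp, idx_en (by omega) x, pair_pair,
      en_default_irrel he (en (comp P a b c x) x (pairIdx (idx (comp P a b c x) x))) x,
      en_idx_self hxs x]
  · rw [hcomp, idx_en (by omega) x, pair_pair,
      en_default_irrel hey (en (comp P a b c x) x (pairIdx (idx (comp P a b c x) x))) x,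
      ← hiy, en_idx_self hys x]

lemma E2 : ((univ : Finset (Fin n × Fin n)).filter
      fun p => p.1 < p.2 ∧ Stp P a b c p.1 p.2 ∧ (comp P a b c p.1).card % 2 = 1 ∧
        (c p.1 : ℕ) < (c p.2 : ℕ)).card
    = ((univ : Finset (Fin n × Fin n)).filter
      fun p => p.1 < p.2 ∧ Stp P a b c p.1 p.2 ∧ (comp P a b c p.1).card % 2 = 1 ∧
        (c p.2 : ℕ) < (c p.1 : ℕ)).card := by
  refine Finset.card_bij'
    (fun p _ => (en (comp P a b c p.1) p.1 (pairIdx (idx (comp P a b c p.1) p.1)),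
      en (comp P a b c p.1) p.1 (pairIdx (idx (comp P a b c p.1) p.1) + 1)))
    (fun p _ => (en (comp P a b c p.1) p.1 (pairIdx (idx (comp P a b c p.1) p.1)),
      en (comp P a b c p.1) p.1 (pairIdx (idx (comp P a b c p.1) p.1) + 1))) ?_ ?_ ?_ ?_
  · intro p hp
    rw [Finset.mem_filter] at hp ⊢
    obtain ⟨-, hlt, hst, hodd, hasc⟩ := hp
    obtain ⟨hS, hlt2, hcomp, hc1, hc2, -, -⟩ := theta2_adj hab hc hst hlt hodd
    have hcols : c p.1 = a ∧ c p.2 = b := by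
      rcases color_opp hab hc hst with h | ⟨h1, h2⟩
      · exact h
      · rw [h1, h2] at hasc; omega
    refine ⟨Finset.mem_univ _, hlt2, hS, by rw [hcomp]; exact hodd, ?_⟩
    rw [hc1, hc2, hcols.1, hcols.2]
    omega
  · intro p hp
    rw [Finset.mem_filter] at hp ⊢
    obtain ⟨-, hlt, hst, hodd, hdesc⟩ := hp
    obtain ⟨hS, hlt2, hcomp, hc1, hc2, -, -⟩ := theta2_adj hab hc hst hlt hodd
    have hcols : c p.1 = b ∧ c p.2 = a := by
      rcases color_opp hab hc hst with ⟨h1, h2⟩ | h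
      · rw [h1, h2] at hdesc; omega
      · exact h
    refine ⟨Finset.mem_univ _, hlt2, hS, by rw [hcomp]; exact hodd, ?_⟩
    rw [hc1, hc2, hcols.1, hcols.2]
    omega
  · intro p hp
    rw [Finset.mem_filter] at hp
    obtain ⟨-, hlt, hst, hodd, -⟩ := hp
    obtain ⟨-, -, -, -, -, h6, h7⟩ := theta2_adj hab hc hst hlt hodd
    exact Prod.ext h6 h7
  · intro p hp
    rw [Finset.mem_filter] at hp
    obtain ⟨-, hlt, hst, hodd, -⟩ := hp
    obtain ⟨-, -, -, -, -, h6, h7⟩ := theta2_adj hab hc hst hlt hodd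
    exact Prod.ext h6 h7

end Palin
end BKsec3

section BKsec4
open Finset
namespace Palin
variable {n N : ℕ} {P : NUIO n} {a b : Fin N} {c : Fin n → Fin N}

lemma card_split {α : Type*} [Fintype α] (Q R : α → Prop) :
    (univ.filter fun x => Q x).card
      = (univ.filter fun x => Q x ∧ R x).card
        + (univ.filter fun x => Q x ∧ ¬ R x).card := by
  classical
  have h := Finset.card_filter_add_card_filter_not
    (s := univ.filter fun x => Q x) (p := fun x => R x)
  rw [Finset.filter_filter, Finset.filter_filter] at h
  omega

lemma bk_odd {u : Fin n} (h : (comp P a b c u).card % 2 = 1) :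
    BKmap P a b c u = Equiv.swap a b (c u) := if_pos h

lemma bk_even {u : Fin n} (h : (comp P a b c u).card % 2 = 0) :
    BKmap P a b c u = c u := if_neg (by omega)

lemma bk_not_inV {u : Fin n} (hu : ¬ inV a b c u) : BKmap P a b c u = c u := by
  have h1 : c u ≠ a := fun h => hu (Or.inl h)
  have h2 : c u ≠ b := fun h => hu (Or.inr h)
  unfold BKmap
  split
  · rw [Equiv.swap_apply_of_ne_of_ne h1 h2]
  · rfl

lemma inV_bk (u : Fin n) : inV a b (BKmap P a b c) u ↔ inV a b c u := by
  by_cases hu : inV a b c u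
  · refine ⟨fun _ => hu, fun _ => ?_⟩
    by_cases h : (comp P a b c u).card % 2 = 1
    · rw [inV_def, bk_odd h]
      rcases hu with h' | h'
      · rw [h', Equiv.swap_apply_left]; exact Or.inr rfl
      · rw [h', Equiv.swap_apply_right]; exact Or.inl rfl
    · rw [inV_def, bk_even (by omega)]; exact hu
  · constructor
    · intro h
      rw [inV_def, bk_not_inV hu, ← inV_def] at h
      exact absurd h hu
    · intro h; exact absurd h hu

lemma stp_bk_eq : Stp P a b (BKmap P a b c) = Stp P a b c := by
  funext u v
  exact propext ⟨fun ⟨h1, h2, h3⟩ => ⟨h1, (inV_bk u).1 h2, (inV_bk v).1 h3⟩,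
    fun ⟨h1, h2, h3⟩ => ⟨h1, (inV_bk u).2 h2, (inV_bk v).2 h3⟩⟩

lemma comp_bk_eq (u : Fin n) : comp P a b (BKmap P a b c) u = comp P a b c u := by
  unfold comp Rch
  rw [stp_bk_eq]

lemma bk_bk : BKmap P a b (BKmap P a b c) = c := by
  funext u
  show (if (comp P a b (BKmap P a b c) u).card % 2 = 1 then
      Equiv.swap a b (BKmap P a b c u) else BKmap P a b c u) = c u
  rw [comp_bk_eq]
  by_cases h : (comp P a b c u).card % 2 = 1
  · rw [if_pos h, bk_odd h, Equiv.swap_apply_self]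
  · rw [if_neg h, bk_even (by omega)]

lemma swap_eq_a {x : Fin N} : Equiv.swap a b x = a ↔ x = b := by
  rw [Equiv.apply_eq_iff_eq_symm_apply, Equiv.symm_swap, Equiv.swap_apply_left]

lemma swap_eq_b {x : Fin N} : Equiv.swap a b x = b ↔ x = a := by
  rw [Equiv.apply_eq_iff_eq_symm_apply, Equiv.symm_swap, Equiv.swap_apply_right]

lemma swap_eq_other {x d : Fin N} (h1 : d ≠ a) (h2 : d ≠ b) :
    Equiv.swap a b x = d ↔ x = d := by
  rw [Equiv.apply_eq_iff_eq_symm_apply, Equiv.symm_swap,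
    Equiv.swap_apply_of_ne_of_ne h1 h2]

variable (hab : (b:ℕ) = (a:ℕ) + 1)
  (hc : ∀ u v : Fin n, Incomp P.lt u v → c u ≠ c v)
include hab hc

lemma bk_proper : ∀ u v : Fin n, Incomp P.lt u v → BKmap P a b c u ≠ BKmap P a b c v := by
  intro u v hin
  by_cases huV : inV a b c u <;> by_cases hvV : inV a b c v
  · have hst : Stp P a b c u v := ⟨hin, huV, hvV⟩
    have hcomp : comp P a b c u = comp P a b c v :=
      comp_eq_of_rch (Relation.ReflTransGen.single hst)
    by_cases h : (comp P a b c u).card % 2 = 1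
    · rw [bk_odd h, bk_odd (hcomp ▸ h)]
      exact fun heq => hc _ _ hin ((Equiv.swap a b).injective heq)
    · rw [bk_even (by omega), bk_even (by rw [← hcomp]; omega)]
      exact hc _ _ hin
  · rw [bk_not_inV hvV]
    intro heq
    have hval := inV_def.1 ((inV_bk (P := P) (a := a) (b := b) (c := c) u).2 huV)
    exact hvV (inV_def.2 (hval.imp (fun h => heq.symm.trans h) (fun h => heq.symm.trans h)))
  · rw [bk_not_inV huV]
    intro heq
    have hval := inV_def.1 ((inV_bk (P := P) (a := a) (b := b) (c := c) v).2 hvV)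
    exact huV (inV_def.2 (hval.imp (fun h => heq.trans h) (fun h => heq.trans h)))
  · rw [bk_not_inV huV, bk_not_inV hvV]
    exact hc _ _ hin

lemma prod_X_count (f : Fin n → Fin N) :
    (∏ i, (MvPolynomial.X (f i) : MvPolynomial (Fin N) ℤ))
      = ∏ d : Fin N, (MvPolynomial.X d : MvPolynomial (Fin N) ℤ)
          ^ (univ.filter fun i => f i = d).card := by
  rw [← Finset.prod_fiberwise univ f (fun i => (MvPolynomial.X (f i) : MvPolynomial (Fin N) ℤ))]
  refine Finset.prod_congr rfl fun d _ => ?_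
  rw [show (∏ i ∈ univ.filter fun i => f i = d, (MvPolynomial.X (f i) : MvPolynomial (Fin N) ℤ))
      = ∏ _i ∈ univ.filter fun i => f i = d, (MvPolynomial.X d : MvPolynomial (Fin N) ℤ) from
    Finset.prod_congr rfl fun i hi => by rw [(Finset.mem_filter.1 hi).2], Finset.prod_const]

lemma E1' : ((univ : Finset (Fin n)).filter
      fun u => c u = a ∧ ¬ (comp P a b c u).card % 2 = 1).card
    = ((univ : Finset (Fin n)).filter
      fun u => c u = b ∧ ¬ (comp P a b c u).card % 2 = 1).card := by
  have h1 : (univ : Finset (Fin n)).filter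
        (fun u => c u = a ∧ ¬ (comp P a b c u).card % 2 = 1)
      = univ.filter (fun u => c u = a ∧ (comp P a b c u).card % 2 = 0) :=
    Finset.filter_congr (fun i _ => by constructor <;>
      (rintro ⟨g1, g2⟩; exact ⟨g1, by omega⟩))
  have h2 : (univ : Finset (Fin n)).filter
        (fun u => c u = b ∧ ¬ (comp P a b c u).card % 2 = 1)
      = univ.filter (fun u => c u = b ∧ (comp P a b c u).card % 2 = 0) :=
    Finset.filter_congr (fun i _ => by constructor <;>
      (rintro ⟨g1, g2⟩; exact ⟨g1, by omega⟩))
  rw [h1, h2]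
  exact E1 hab hc

lemma bk_count (d : Fin N) :
    (univ.filter fun i => BKmap P a b c i = d).card
      = (univ.filter fun i => Equiv.swap a b (c i) = d).card := by
  have hs1 := Finset.card_filter_add_card_filter_not
    (s := univ.filter fun i => BKmap P a b c i = d)
    (p := fun i => (comp P a b c i).card % 2 = 1)
  have hs2 := Finset.card_filter_add_card_filter_not
    (s := univ.filter fun i => Equiv.swap a b (c i) = d)
    (p := fun i => (comp P a b c i).card % 2 = 1)
  rw [Finset.filter_filter, Finset.filter_filter] at hs1 hs2
  have hodd : (univ.filter fun i => BKmap P a b c i = d ∧ (comp P a b c i).card % 2 = 1).card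
      = (univ.filter fun i => Equiv.swap a b (c i) = d ∧ (comp P a b c i).card % 2 = 1).card := by
    apply congrArg
    apply Finset.filter_congr
    intro i _
    constructor
    · rintro ⟨h1, h2⟩; rw [bk_odd h2] at h1; exact ⟨h1, h2⟩
    · rintro ⟨h1, h2⟩; exact ⟨by rw [bk_odd h2]; exact h1, h2⟩
  have heven : (univ.filter fun i => BKmap P a b c i = d ∧ ¬ (comp P a b c i).card % 2 = 1).card
      = (univ.filter fun i => Equiv.swap a b (c i) = d ∧ ¬ (comp P a b c i).card % 2 = 1).card := by
    have l1 : (univ : Finset (Fin n)).filter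
          (fun i => BKmap P a b c i = d ∧ ¬ (comp P a b c i).card % 2 = 1)
        = univ.filter (fun i => c i = d ∧ ¬ (comp P a b c i).card % 2 = 1) :=
      Finset.filter_congr (fun i _ => by
        constructor
        · rintro ⟨h1, h2⟩; rw [bk_even (by omega)] at h1; exact ⟨h1, h2⟩
        · rintro ⟨h1, h2⟩; exact ⟨by rw [bk_even (by omega)]; exact h1, h2⟩)
    rw [l1]
    by_cases hda : d = a
    · subst hda
      have l2 : (univ : Finset (Fin n)).filter
            (fun i => Equiv.swap d b (c i) = d ∧ ¬ (comp P d b c i).card % 2 = 1)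
          = univ.filter (fun i => c i = b ∧ ¬ (comp P d b c i).card % 2 = 1) :=
        Finset.filter_congr (fun i _ => by rw [swap_eq_a])
      rw [l2]
      exact E1' hab hc
    · by_cases hdb : d = b
      · subst hdb
        have l2 : (univ : Finset (Fin n)).filter
              (fun i => Equiv.swap a d (c i) = d ∧ ¬ (comp P a d c i).card % 2 = 1)
            = univ.filter (fun i => c i = a ∧ ¬ (comp P a d c i).card % 2 = 1) :=
          Finset.filter_congr (fun i _ => by rw [swap_eq_b])
        rw [l2]
        exact (E1' hab hc).symm
      · have l2 : (univ : Finset (Fin n)).filter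
              (fun i => Equiv.swap a b (c i) = d ∧ ¬ (comp P a b c i).card % 2 = 1)
            = univ.filter (fun i => c i = d ∧ ¬ (comp P a b c i).card % 2 = 1) :=
          Finset.filter_congr (fun i _ => by rw [swap_eq_other hda hdb])
        rw [l2]
  omega

lemma bk_content :
    (∏ i, (MvPolynomial.X (BKmap P a b c i) : MvPolynomial (Fin N) ℤ))
      = ∏ i, MvPolynomial.X (Equiv.swap a b (c i)) := by
  rw [prod_X_count hab hc, prod_X_count hab hc]
  refine Finset.prod_congr rfl fun d _ => ?_
  rw [bk_count hab hc d]

end Palin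
end BKsec4

section BKsec5
open Finset
namespace Palin
variable {n N : ℕ} {P : NUIO n} {a b : Fin N} {c : Fin n → Fin N}

variable (hab : (b:ℕ) = (a:ℕ) + 1)
  (hc : ∀ u v : Fin n, Incomp P.lt u v → c u ≠ c v)
include hab hc

lemma bk_outside {u v : Fin n} (hin : Incomp P.lt u v)
    (hni : ¬ (Stp P a b c u v ∧ (comp P a b c u).card % 2 = 1)) :
    ((BKmap P a b c u : ℕ) < (BKmap P a b c v : ℕ) ↔ (c u : ℕ) < (c v : ℕ)) := by
  by_cases huV : inV a b c u <;> by_cases hvV : inV a b c v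
  · have hst : Stp P a b c u v := ⟨hin, huV, hvV⟩
    have hev : (comp P a b c u).card % 2 = 0 := by
      by_contra h
      exact hni ⟨hst, by omega⟩
    have hev2 : (comp P a b c v).card % 2 = 0 := by
      rw [← comp_eq_of_rch (Relation.ReflTransGen.single hst)]
      exact hev
    rw [bk_even hev, bk_even hev2]
  · rw [bk_not_inV hvV]
    rw [inV_def] at hvV
    push_neg at hvV
    have hval1 : (c v : ℕ) ≠ (a : ℕ) := fun h => hvV.1 (Fin.val_injective h)
    have hval2 : (c v : ℕ) ≠ (b : ℕ) := fun h => hvV.2 (Fin.val_injective h)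
    by_cases hodd : (comp P a b c u).card % 2 = 1
    · rw [bk_odd hodd]
      rcases huV with h | h <;> rw [h]
      · rw [Equiv.swap_apply_left]; omega
      · rw [Equiv.swap_apply_right]; omega
    · rw [bk_even (by omega)]
  · rw [bk_not_inV huV]
    rw [inV_def] at huV
    push_neg at huV
    have hval1 : (c u : ℕ) ≠ (a : ℕ) := fun h => huV.1 (Fin.val_injective h)
    have hval2 : (c u : ℕ) ≠ (b : ℕ) := fun h => huV.2 (Fin.val_injective h)
    by_cases hodd : (comp P a b c v).card % 2 = 1
    · rw [bk_odd hodd]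
      rcases hvV with h | h <;> rw [h]
      · rw [Equiv.swap_apply_left]; omega
      · rw [Equiv.swap_apply_right]; omega
    · rw [bk_even (by omega)]
  · rw [bk_not_inV huV, bk_not_inV hvV]

lemma bk_asc : ascC P.lt (BKmap P a b c) = ascC P.lt c := by
  show (univ.filter fun p : Fin n × Fin n => p.1 < p.2 ∧ Incomp P.lt p.1 p.2 ∧
      (BKmap P a b c p.1 : ℕ) < (BKmap P a b c p.2 : ℕ)).card
    = (univ.filter fun p : Fin n × Fin n => p.1 < p.2 ∧ Incomp P.lt p.1 p.2 ∧
      (c p.1 : ℕ) < (c p.2 : ℕ)).card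
  have hs1 := Finset.card_filter_add_card_filter_not
    (s := univ.filter fun p : Fin n × Fin n => p.1 < p.2 ∧ Incomp P.lt p.1 p.2 ∧
      (BKmap P a b c p.1 : ℕ) < (BKmap P a b c p.2 : ℕ))
    (p := fun p => Stp P a b c p.1 p.2 ∧ (comp P a b c p.1).card % 2 = 1)
  have hs2 := Finset.card_filter_add_card_filter_not
    (s := univ.filter fun p : Fin n × Fin n => p.1 < p.2 ∧ Incomp P.lt p.1 p.2 ∧
      (c p.1 : ℕ) < (c p.2 : ℕ))
    (p := fun p => Stp P a b c p.1 p.2 ∧ (comp P a b c p.1).card % 2 = 1)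
  rw [Finset.filter_filter, Finset.filter_filter] at hs1 hs2
  have hinside : (univ.filter fun p : Fin n × Fin n =>
        (p.1 < p.2 ∧ Incomp P.lt p.1 p.2 ∧ (BKmap P a b c p.1 : ℕ) < (BKmap P a b c p.2 : ℕ)) ∧
        (Stp P a b c p.1 p.2 ∧ (comp P a b c p.1).card % 2 = 1)).card
      = (univ.filter fun p : Fin n × Fin n =>
        (p.1 < p.2 ∧ Incomp P.lt p.1 p.2 ∧ (c p.1 : ℕ) < (c p.2 : ℕ)) ∧
        (Stp P a b c p.1 p.2 ∧ (comp P a b c p.1).card % 2 = 1)).card := by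
    have l1 : (univ.filter fun p : Fin n × Fin n =>
          (p.1 < p.2 ∧ Incomp P.lt p.1 p.2 ∧ (BKmap P a b c p.1 : ℕ) < (BKmap P a b c p.2 : ℕ)) ∧
          (Stp P a b c p.1 p.2 ∧ (comp P a b c p.1).card % 2 = 1))
        = univ.filter fun p : Fin n × Fin n =>
          p.1 < p.2 ∧ Stp P a b c p.1 p.2 ∧ (comp P a b c p.1).card % 2 = 1 ∧
          (c p.2 : ℕ) < (c p.1 : ℕ) := by
      refine Finset.filter_congr fun p _ => ?_
      constructor
      · rintro ⟨⟨h1, h2, h3⟩, h4, h5⟩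
        refine ⟨h1, h4, h5, ?_⟩
        have h5' : (comp P a b c p.2).card % 2 = 1 := by
          rw [← comp_eq_of_rch (Relation.ReflTransGen.single h4)]; exact h5
        rw [bk_odd h5, bk_odd h5'] at h3
        rcases color_opp hab hc h4 with ⟨g1, g2⟩ | ⟨g1, g2⟩ <;>
          rw [g1, g2] at h3 ⊢ <;>
          rw [Equiv.swap_apply_left, Equiv.swap_apply_right] at h3 <;> omega
      · rintro ⟨h1, h4, h5, h3⟩
        have h5' : (comp P a b c p.2).card % 2 = 1 := by
          rw [← comp_eq_of_rch (Relation.ReflTransGen.single h4)]; exact h5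
        refine ⟨⟨h1, h4.1, ?_⟩, h4, h5⟩
        rw [bk_odd h5, bk_odd h5']
        rcases color_opp hab hc h4 with ⟨g1, g2⟩ | ⟨g1, g2⟩ <;>
          rw [g1, g2] at h3 ⊢ <;>
          rw [Equiv.swap_apply_left, Equiv.swap_apply_right] <;> omega
    have l2 : (univ.filter fun p : Fin n × Fin n =>
          (p.1 < p.2 ∧ Incomp P.lt p.1 p.2 ∧ (c p.1 : ℕ) < (c p.2 : ℕ)) ∧
          (Stp P a b c p.1 p.2 ∧ (comp P a b c p.1).card % 2 = 1))
        = univ.filter fun p : Fin n × Fin n =>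
          p.1 < p.2 ∧ Stp P a b c p.1 p.2 ∧ (comp P a b c p.1).card % 2 = 1 ∧
          (c p.1 : ℕ) < (c p.2 : ℕ) := by
      refine Finset.filter_congr fun p _ => ?_
      constructor
      · rintro ⟨⟨h1, h2, h3⟩, h4, h5⟩; exact ⟨h1, h4, h5, h3⟩
      · rintro ⟨h1, h4, h5, h3⟩; exact ⟨⟨h1, h4.1, h3⟩, h4, h5⟩
    rw [l1, l2]
    exact (E2 hab hc).symm
  have houtside : (univ.filter fun p : Fin n × Fin n =>
        (p.1 < p.2 ∧ Incomp P.lt p.1 p.2 ∧ (BKmap P a b c p.1 : ℕ) < (BKmap P a b c p.2 : ℕ)) ∧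
        ¬ (Stp P a b c p.1 p.2 ∧ (comp P a b c p.1).card % 2 = 1)).card
      = (univ.filter fun p : Fin n × Fin n =>
        (p.1 < p.2 ∧ Incomp P.lt p.1 p.2 ∧ (c p.1 : ℕ) < (c p.2 : ℕ)) ∧
        ¬ (Stp P a b c p.1 p.2 ∧ (comp P a b c p.1).card % 2 = 1)).card := by
    apply congrArg
    refine Finset.filter_congr fun p _ => ?_
    constructor
    · rintro ⟨⟨h1, h2, h3⟩, h4⟩
      exact ⟨⟨h1, h2, (bk_outside hab hc h2 h4).1 h3⟩, h4⟩
    · rintro ⟨⟨h1, h2, h3⟩, h4⟩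
      exact ⟨⟨h1, h2, (bk_outside hab hc h2 h4).2 h3⟩, h4⟩
  omega

end Palin
end BKsec5

section Final
open Finset
namespace Palin
variable {n N : ℕ}

noncomputable def Sj (N n : ℕ) (lt : Fin n → Fin n → Prop) (j : ℕ) :
    MvPolynomial (Fin N) ℤ :=
  ∑ c ∈ Finset.univ.filter (fun c : Fin n → Fin N =>
      ∀ a b : Fin n, Incomp lt a b → c a ≠ c b),
    if ascC lt c = j then ∏ i, MvPolynomial.X (c i) else 0

lemma coeff_chrom (lt : Fin n → Fin n → Prop) (j : ℕ) :
    (chromIncQSym N n lt).coeff j = Sj N n lt j := by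
  unfold chromIncQSym Sj
  rw [Polynomial.finset_sum_coeff]
  refine Finset.sum_congr rfl fun c _ => ?_
  rw [mul_comm, Polynomial.C_mul_X_pow_eq_monomial, Polynomial.coeff_monomial]

lemma rename_swap_adj {P : NUIO n} {a b : Fin N} (hab : (b:ℕ) = (a:ℕ) + 1) (j : ℕ) :
    MvPolynomial.rename (⇑(Equiv.swap a b)) (Sj N n P.lt j) = Sj N n P.lt j := by
  unfold Sj
  rw [map_sum]
  rw [Finset.sum_congr rfl (fun c hcmem => show
      MvPolynomial.rename (⇑(Equiv.swap a b))
        (if ascC P.lt c = j then (∏ i, MvPolynomial.X (c i) : MvPolynomial (Fin N) ℤ) else 0)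
      = if ascC P.lt c = j then ∏ i, MvPolynomial.X (BKmap P a b c i) else 0 from by
    have hc : ∀ u v : Fin n, Incomp P.lt u v → c u ≠ c v := (Finset.mem_filter.1 hcmem).2
    rw [apply_ite (MvPolynomial.rename (⇑(Equiv.swap a b))), map_zero, map_prod]
    simp only [MvPolynomial.rename_X]
    rw [← bk_content hab hc])]
  refine Finset.sum_bij' (fun c _ => BKmap P a b c) (fun c _ => BKmap P a b c)
    ?_ ?_ ?_ ?_ ?_
  · intro c hcmem
    rw [Finset.mem_filter] at hcmem ⊢
    exact ⟨Finset.mem_univ _, bk_proper hab hcmem.2⟩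
  · intro c hcmem
    rw [Finset.mem_filter] at hcmem ⊢
    exact ⟨Finset.mem_univ _, bk_proper hab hcmem.2⟩
  · intro c _; exact bk_bk
  · intro c _; exact bk_bk
  · intro c hcmem
    have hc : ∀ u v : Fin n, Incomp P.lt u v → c u ≠ c v := (Finset.mem_filter.1 hcmem).2
    rw [bk_asc hab hc]

lemma rename_swap_dist {P : NUIO n} (j : ℕ) :
    ∀ (d : ℕ) (x y : Fin N), (y:ℕ) = (x:ℕ) + d + 1 →
      MvPolynomial.rename (⇑(Equiv.swap x y)) (Sj N n P.lt j) = Sj N n P.lt j := by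
  intro d
  induction d with
  | zero => exact fun x y h => rename_swap_adj (by omega) j
  | succ d ih =>
    intro x y h
    have hxN : (x:ℕ) + d + 1 < N := by have := y.isLt; omega
    set m : Fin N := ⟨(x:ℕ) + d + 1, hxN⟩ with hm
    have hmval : (m:ℕ) = (x:ℕ) + d + 1 := rfl
    have hxm : x ≠ m := fun he => by
      have := congrArg Fin.val he; omega
    have hxy : x ≠ y := fun he => by
      have := congrArg Fin.val he; omega
    have h1 : MvPolynomial.rename (⇑(Equiv.swap m y)) (Sj N n P.lt j) = Sj N n P.lt j :=
      rename_swap_adj (show (y:ℕ) = (m:ℕ) + 1 by omega) j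
    have h2 : MvPolynomial.rename (⇑(Equiv.swap x m)) (Sj N n P.lt j) = Sj N n P.lt j :=
      ih x m (by omega)
    have e1 := Equiv.swap_apply_apply (Equiv.swap m y) x m
    rw [Equiv.swap_apply_of_ne_of_ne hxm hxy, Equiv.swap_apply_left, Equiv.swap_inv] at e1
    rw [e1, Equiv.Perm.coe_mul, Equiv.Perm.coe_mul, ← MvPolynomial.rename_rename,
      ← MvPolynomial.rename_rename, h1, h2, h1]

lemma rename_swap_all {P : NUIO n} {x y : Fin N} (hxy : x ≠ y) (j : ℕ) :
    MvPolynomial.rename (⇑(Equiv.swap x y)) (Sj N n P.lt j) = Sj N n P.lt j := by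
  rcases lt_trichotomy (x:ℕ) (y:ℕ) with h | h | h
  · exact rename_swap_dist j ((y:ℕ) - (x:ℕ) - 1) x y (by omega)
  · exact absurd (Fin.val_injective h) hxy
  · rw [Equiv.swap_comm]
    exact rename_swap_dist j ((x:ℕ) - (y:ℕ) - 1) y x (by omega)

lemma rename_perm {P : NUIO n} (σ : Equiv.Perm (Fin N)) (j : ℕ) :
    MvPolynomial.rename (⇑σ) (Sj N n P.lt j) = Sj N n P.lt j := by
  refine Equiv.Perm.swap_induction_on σ ?_ fun f x y hxy hf => ?_
  · rw [Equiv.Perm.coe_one, MvPolynomial.rename_id, AlgHom.id_apply]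
  · rw [Equiv.Perm.coe_mul, ← MvPolynomial.rename_rename, hf, rename_swap_all hxy j]

lemma asc_le {P : NUIO n} (c : Fin n → Fin N) : ascC P.lt c ≤ numIncEdges P.lt := by
  apply Finset.card_le_card
  intro p hp
  rw [Finset.mem_filter] at hp ⊢
  exact ⟨hp.1, hp.2.1, hp.2.2.1⟩

lemma asc_rev {P : NUIO n} {c : Fin n → Fin N}
    (hc : ∀ u v : Fin n, Incomp P.lt u v → c u ≠ c v) :
    ascC P.lt (fun i => (c i).rev) = numIncEdges P.lt - ascC P.lt c := by
  have hsplit := Finset.card_filter_add_card_filter_not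
    (s := univ.filter fun p : Fin n × Fin n => p.1 < p.2 ∧ Incomp P.lt p.1 p.2)
    (p := fun p => (c p.1 : ℕ) < (c p.2 : ℕ))
  rw [Finset.filter_filter, Finset.filter_filter] at hsplit
  have hasc : (univ.filter fun p : Fin n × Fin n =>
        (p.1 < p.2 ∧ Incomp P.lt p.1 p.2) ∧ (c p.1 : ℕ) < (c p.2 : ℕ)).card = ascC P.lt c := by
    apply congrArg
    refine Finset.filter_congr fun p _ => ?_
    constructor
    · rintro ⟨⟨h1, h2⟩, h3⟩; exact ⟨h1, h2, h3⟩
    · rintro ⟨h1, h2, h3⟩; exact ⟨⟨h1, h2⟩, h3⟩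
  have hdesc : (univ.filter fun p : Fin n × Fin n =>
        (p.1 < p.2 ∧ Incomp P.lt p.1 p.2) ∧ ¬ (c p.1 : ℕ) < (c p.2 : ℕ)).card
      = ascC P.lt (fun i => (c i).rev) := by
    apply congrArg
    refine Finset.filter_congr fun p _ => ?_
    constructor
    · rintro ⟨⟨h1, h2⟩, h3⟩
      have hne : (c p.1 : ℕ) ≠ (c p.2 : ℕ) := fun he => hc _ _ h2 (Fin.val_injective he)
      refine ⟨h1, h2, ?_⟩
      show ((c p.1).rev : ℕ) < ((c p.2).rev : ℕ)
      have := (c p.1).isLt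
      have := (c p.2).isLt
      simp only [Fin.val_rev]
      omega
    · rintro ⟨h1, h2, h3⟩
      have h3' : ((c p.1).rev : ℕ) < ((c p.2).rev : ℕ) := h3
      simp only [Fin.val_rev] at h3'
      have := (c p.1).isLt
      have := (c p.2).isLt
      exact ⟨⟨h1, h2⟩, by omega⟩
  have hE : numIncEdges P.lt
      = (univ.filter fun p : Fin n × Fin n => p.1 < p.2 ∧ Incomp P.lt p.1 p.2).card := rfl
  omega

theorem chromatic_qsym_palindromic' (hN : 1 ≤ N) (P : NUIO n) :
    ∀ j ≤ numIncEdges P.lt,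
      (chromIncQSym N n P.lt).coeff j =
        (chromIncQSym N n P.lt).coeff (numIncEdges P.lt - j) := by
  intro j hj
  rw [coeff_chrom, coeff_chrom]
  have hrev : MvPolynomial.rename (⇑(Fin.revPerm : Equiv.Perm (Fin N))) (Sj N n P.lt j)
      = Sj N n P.lt (numIncEdges P.lt - j) := by
    unfold Sj
    rw [map_sum]
    rw [Finset.sum_congr rfl (fun c hcmem => show
        MvPolynomial.rename (⇑(Fin.revPerm : Equiv.Perm (Fin N)))
          (if ascC P.lt c = j then (∏ i, MvPolynomial.X (c i) : MvPolynomial (Fin N) ℤ) else 0)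
        = if ascC P.lt c = j then ∏ i, MvPolynomial.X ((c i).rev) else 0 from by
      rw [apply_ite (MvPolynomial.rename (⇑(Fin.revPerm : Equiv.Perm (Fin N)))), map_zero,
        map_prod]
      simp only [MvPolynomial.rename_X, Fin.revPerm_apply])]
    refine Finset.sum_bij' (fun c _ => fun i => (c i).rev) (fun c _ => fun i => (c i).rev)
      ?_ ?_ ?_ ?_ ?_
    · intro c hcmem
      rw [Finset.mem_filter] at hcmem ⊢
      refine ⟨Finset.mem_univ _, fun u v hin => ?_⟩
      exact fun he => hcmem.2 u v hin (Fin.rev_injective he)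
    · intro c hcmem
      rw [Finset.mem_filter] at hcmem ⊢
      refine ⟨Finset.mem_univ _, fun u v hin => ?_⟩
      exact fun he => hcmem.2 u v hin (Fin.rev_injective he)
    · intro c _; funext i; exact Fin.rev_rev _
    · intro c _; funext i; exact Fin.rev_rev _
    · intro c hcmem
      have hc : ∀ u v : Fin n, Incomp P.lt u v → c u ≠ c v := (Finset.mem_filter.1 hcmem).2
      have h1 := asc_rev hc
      have h2 := asc_le (P := P) c
      have hiff : (ascC P.lt c = j) ↔
          ((ascC P.lt fun i => (c i).rev) = numIncEdges P.lt - j) :=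
        ⟨fun h => by omega, fun h => by omega⟩
      exact if_congr hiff rfl rfl
  rw [← hrev, rename_perm]

end Palin
end Final

/-- for a natural unit interval order `P` on `[n]` with `E` edges in its
incomparability graph, `X_{inc(P)}(x_1,…,x_N;t)` is palindromic in `t`:
the coefficients of `t^j` and `t^{E-j}` agree for all `0 ≤ j ≤ E`. -/
theorem chromatic_qsym_palindromic (n N : ℕ) (hN : 1 ≤ N) (P : NUIO n) :
    ∀ j ≤ numIncEdges P.lt,
      (chromIncQSym N n P.lt).coeff j =
        (chromIncQSym N n P.lt).coeff (numIncEdges P.lt - j) :=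
  Palin.chromatic_qsym_palindromic' hN P
end

section
/- Let P be a natural unit interval order on [n], let G = inc(P), and fix N ≥ n. Suppose (c_λ(t))_{λ ⊢ n} is a family of polynomials in ℚ[t], indexed by partitions λ of n, satisfying X_G(x_1,…,x_N;t) = Σ_{λ⊢n} c_λ(t) e_λ(x_1,…,x_N), where e_λ = e_{λ_1} e_{λ_2} ⋯ and e_m is the elementary symmetric polynomial of degree m in x_1,…,x_N. Then for every j ≥ 1, Σ_{λ⊢n with exactly j parts} c_λ(t) = Σ_{o ∈ O(G,j)} t^{asc(o)}, where O(G,j) is the set of acyclic orientations of G with exactly j sinks and asc(o) is the number of edges of G directed by o from i to j with i < j. -/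
open scoped Classical

/-- The chromatic quasisymmetric polynomial `X_{inc(P)}(x_1,…,x_N;t)`, over `ℚ`. -/
noncomputable def chromIncQSymQ (N n : ℕ) (lt : Fin n → Fin n → Prop) :
    Polynomial (MvPolynomial (Fin N) ℚ) :=
  ∑ c ∈ Finset.univ.filter (fun c : Fin n → Fin N =>
      ∀ a b : Fin n, Incomp lt a b → c a ≠ c b),
    Polynomial.X ^ ascC lt c * Polynomial.C (∏ i, MvPolynomial.X (c i))

/-- Partitions of `n` (with at most `n` parts, weakly decreasing, trailing zeros):
`p : Fin n → Fin (n+1)` weakly decreasing with `∑ p i = n`. -/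
noncomputable def partitionsOf (n : ℕ) : Finset (Fin n → Fin (n + 1)) :=
  Finset.univ.filter fun p =>
    (∀ i j : Fin n, i ≤ j → p j ≤ p i) ∧ (∑ i, (p i : ℕ)) = n

/-- `e_λ = e_{λ_1} e_{λ_2} ⋯` for the partition `p` (note `e_0 = 1`). -/
noncomputable def eProd (N : ℕ) {n : ℕ} (p : Fin n → Fin (n + 1)) :
    MvPolynomial (Fin N) ℚ :=
  ∏ i, MvPolynomial.esymm (Fin N) ℚ (p i : ℕ)

/-- `o` is an orientation of the incomparability graph of `lt`: it directs each edge
in exactly one direction, and directs nothing else. -/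
def IsOrientation {n : ℕ} (lt : Fin n → Fin n → Prop) (o : Fin n → Fin n → Bool) : Prop :=
  (∀ a b, o a b = true → Incomp lt a b) ∧
  (∀ a b, Incomp lt a b → (o a b = true ↔ o b a = false))

/-- The acyclic orientations of the incomparability graph of `lt` having exactly `j`
sinks (a sink is a vertex with no outgoing edge). -/
noncomputable def acyclicOrientations {n : ℕ} (lt : Fin n → Fin n → Prop) (j : ℕ) :
    Finset (Fin n → Fin n → Bool) :=
  Finset.univ.filter fun o => IsOrientation lt o ∧
    (∀ a, ¬ Relation.TransGen (fun x y => o x y = true) a a) ∧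
    (Finset.univ.filter fun a : Fin n => ∀ b, o a b = false).card = j

/-- `asc(o)`: the number of edges directed by `o` from `i` to `j` with `i < j`. -/
noncomputable def ascOrient {n : ℕ} (o : Fin n → Fin n → Bool) : ℕ :=
  (Finset.univ.filter fun p : Fin n × Fin n => p.1 < p.2 ∧ o p.1 p.2 = true).card

open Finset

namespace SinkAux
variable {n N : ℕ}




/-- Weight of a monomial: nonzero only if the support is a nonempty initial segment
`{0,…,s-1}`; then it is `(-1)^(n-j) * (-1)^(s-1) * C(μ(s-1), j)`. -/
noncomputable def w (n j : ℕ) {N : ℕ} (μ : Fin N →₀ ℕ) : ℚ :=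
  if h : μ.support.Nonempty ∧ ∀ r s : Fin N, r ≤ s → s ∈ μ.support → r ∈ μ.support
  then (-1) ^ (n - j) * (-1) ^ ((μ.support.max' h.1 : ℕ)) *
    ((μ (μ.support.max' h.1)).choose j : ℚ)
  else 0

/-- The linear functional `L`. -/
noncomputable def L (n j : ℕ) {N : ℕ} (f : MvPolynomial (Fin N) ℚ) : ℚ :=
  ∑ μ ∈ f.support, MvPolynomial.coeff μ f * w n j μ

lemma L_eq_sum_superset (n j : ℕ) {N : ℕ} (f : MvPolynomial (Fin N) ℚ)
    {T : Finset (Fin N →₀ ℕ)} (h : f.support ⊆ T) :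
    L n j f = ∑ μ ∈ T, MvPolynomial.coeff μ f * w n j μ := by
  refine Finset.sum_subset h ?_
  intro μ _ hμ
  rw [MvPolynomial.notMem_support_iff.mp hμ, zero_mul]

lemma L_add (n j : ℕ) {N : ℕ} (f g : MvPolynomial (Fin N) ℚ) :
    L n j (f + g) = L n j f + L n j g := by
  rw [L_eq_sum_superset n j f (Finset.subset_union_left (s₂ := g.support)),
    L_eq_sum_superset n j g (Finset.subset_union_right (s₁ := f.support)),
    L_eq_sum_superset n j (f + g)
      (Finset.Subset.trans (MvPolynomial.support_add) (Finset.Subset.refl _)),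
    ← Finset.sum_add_distrib]
  exact Finset.sum_congr rfl fun μ _ => by rw [MvPolynomial.coeff_add, add_mul]

lemma L_zero (n j : ℕ) {N : ℕ} : L n j (0 : MvPolynomial (Fin N) ℚ) = 0 := by
  simp [L]

/-- `L` as an additive monoid hom. -/
noncomputable def Lhom (n j N : ℕ) : MvPolynomial (Fin N) ℚ →+ ℚ :=
  { toFun := L n j, map_zero' := L_zero n j, map_add' := L_add n j }

lemma Lhom_apply (n j N : ℕ) (f : MvPolynomial (Fin N) ℚ) : Lhom n j N f = L n j f := rfl

lemma L_C_mul (n j : ℕ) {N : ℕ} (q : ℚ) (g : MvPolynomial (Fin N) ℚ) :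
    L n j (MvPolynomial.C q * g) = q * L n j g := by
  rcases eq_or_ne q 0 with rfl | hq
  · simp [L_zero]
  · have hs : (MvPolynomial.C q * g).support = g.support := by
      ext μ
      simp [MvPolynomial.mem_support_iff, MvPolynomial.coeff_C_mul, hq]
    rw [L, hs, L, Finset.mul_sum]
    exact Finset.sum_congr rfl fun μ _ => by rw [MvPolynomial.coeff_C_mul]; ring

lemma L_monomial (n j : ℕ) {N : ℕ} (μ : Fin N →₀ ℕ) :
    L n j (MvPolynomial.monomial μ (1 : ℚ)) = w n j μ := by
  rw [L, MvPolynomial.support_monomial]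
  simp [MvPolynomial.coeff_monomial]

/-- The exponent (content) of the monomial `∏ x_{f i}`. -/
noncomputable def cont {n N : ℕ} (f : Fin n → Fin N) : Fin N →₀ ℕ :=
  ∑ i, Finsupp.single (f i) 1

lemma cont_apply {n N : ℕ} (f : Fin n → Fin N) (v : Fin N) :
    cont f v = #(univ.filter fun i => f i = v) := by
  rw [cont, Finset.card_filter]
  rw [Finsupp.finset_sum_apply]
  exact Finset.sum_congr rfl fun i _ => by rw [Finsupp.single_apply]

lemma mem_support_cont {n N : ℕ} (f : Fin n → Fin N) (v : Fin N) :
    v ∈ (cont f).support ↔ ∃ i, f i = v := by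
  rw [Finsupp.mem_support_iff, cont_apply]
  simp [Finset.card_eq_zero, Finset.filter_eq_empty_iff, not_forall]

lemma prod_X_eq_monomial {n N : ℕ} (f : Fin n → Fin N) :
    (∏ i, (MvPolynomial.X (f i) : MvPolynomial (Fin N) ℚ)) =
      MvPolynomial.monomial (cont f) 1 := by
  rw [cont]
  induction (univ : Finset (Fin n)) using Finset.induction with
  | empty => simp
  | insert _ _ h ih =>
    rw [Finset.prod_insert h, Finset.sum_insert h, ih, MvPolynomial.X,
      MvPolynomial.monomial_mul, one_mul]




variable {n N : ℕ}

/-- `f` is a "good" map for `(S, k)`: zero off `S`, values `< k` on `S`, surjective onto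
`{0,…,k-1}` from `S`, and strictly compatible with `R` on `S`. -/
def Good (R : Fin n → Fin n → Prop) (S : Finset (Fin n)) (k : ℕ) (f : Fin n → Fin N) : Prop :=
  (∀ a, a ∉ S → (f a : ℕ) = 0) ∧ (∀ a ∈ S, (f a : ℕ) < k) ∧
  (∀ v, v < k → ∃ a ∈ S, (f a : ℕ) = v) ∧
  (∀ a ∈ S, ∀ b ∈ S, R a b → (f a : ℕ) < (f b : ℕ))

noncomputable def cnt (R : Fin n → Fin n → Prop) (S : Finset (Fin n)) (k : ℕ) : ℕ :=
  #((univ : Finset (Fin n → Fin N)).filter (Good R S k))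

lemma cnt_eq_zero (R : Fin n → Fin n → Prop) {S : Finset (Fin n)} {k : ℕ}
    (h : #S < k) : cnt (N := N) R S k = 0 := by
  rw [cnt, Finset.card_eq_zero, Finset.filter_eq_empty_iff]
  intro f _ hG
  obtain ⟨h0, h1, h2, h3⟩ := hG
  have hsurj : Set.SurjOn (fun a => (f a : ℕ)) ↑S ↑(range k) := by
    intro v hv
    rw [Finset.mem_coe, Finset.mem_range] at hv
    obtain ⟨a, ha, hfa⟩ := h2 v hv
    exact ⟨a, ha, hfa⟩
  have := Finset.card_le_card_of_surjOn _ hsurj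
  rw [Finset.card_range] at this
  omega

lemma cnt_succ (R : Fin n → Fin n → Prop) (S : Finset (Fin n)) (k : ℕ)
    (hkN : k + 1 ≤ N) :
    cnt (N := N) R S (k + 1) =
      ∑ B ∈ ((S.filter fun a => ∀ b ∈ S, ¬ R b a).powerset.filter fun B => B.Nonempty),
        cnt (N := N) R (S \ B) k := by
  have hN : 0 < N := by omega
  set Mn := S.filter fun a => ∀ b ∈ S, ¬ R b a with hMn
  rw [cnt, Finset.card_eq_sum_card_fiberwise
    (f := fun f : Fin n → Fin N => S.filter fun a => (f a : ℕ) = 0)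
    (t := Mn.powerset.filter fun B => B.Nonempty) ?maps]
  case maps =>
    intro f hf
    rw [Finset.mem_coe, Finset.mem_filter] at hf
    obtain ⟨h0, h1, h2, h3⟩ := hf.2
    rw [Finset.mem_coe, Finset.mem_filter, Finset.mem_powerset]
    constructor
    · intro a ha
      rw [Finset.mem_filter] at ha
      rw [hMn, Finset.mem_filter]
      refine ⟨ha.1, fun b hb hRba => ?_⟩
      have := h3 b hb a ha.1 hRba
      omega
    · obtain ⟨a, ha, hfa⟩ := h2 0 (by omega)
      exact ⟨a, Finset.mem_filter.mpr ⟨ha, hfa⟩⟩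
  refine Finset.sum_congr rfl fun B hB => ?_
  rw [Finset.mem_filter, Finset.mem_powerset] at hB
  obtain ⟨hBMn, hBne⟩ := hB
  have hBS : B ⊆ S := hBMn.trans (Finset.filter_subset _ _)
  rw [cnt]
  refine Finset.card_nbij'
    (i := fun f a => if a ∈ S \ B then (⟨(f a : ℕ) - 1,
      lt_of_le_of_lt (Nat.sub_le _ _) (f a).isLt⟩ : Fin N) else ⟨0, hN⟩)
    (j := fun g a => if a ∈ S \ B then
      (if h : (g a : ℕ) + 1 < N then (⟨(g a : ℕ) + 1, h⟩ : Fin N) else ⟨0, hN⟩)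
      else ⟨0, hN⟩) ?hi ?hj ?hji ?hij
  case hi =>
    intro f hf
    rw [Finset.mem_coe, Finset.mem_filter, Finset.mem_filter] at hf
    obtain ⟨⟨-, h0, h1, h2, h3⟩, hfib⟩ := hf
    have hB0 : ∀ a, a ∈ B ↔ (a ∈ S ∧ (f a : ℕ) = 0) := by
      intro a; rw [← hfib, Finset.mem_filter]
    rw [Finset.mem_coe, Finset.mem_filter]
    refine ⟨Finset.mem_univ _, ?_, ?_, ?_, ?_⟩
    · intro a ha; simp only [ha, ite_false]
    · intro a ha
      have ha' := Finset.mem_sdiff.mp ha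
      have hne : (f a : ℕ) ≠ 0 := fun h => ha'.2 ((hB0 a).mpr ⟨ha'.1, h⟩)
      have := h1 a ha'.1
      simp only [ha, if_pos]
      omega
    · intro v hv
      obtain ⟨a, ha, hfa⟩ := h2 (v + 1) (by omega)
      have haB : a ∉ B := fun h => by
        have := (hB0 a).mp h; omega
      have haSB : a ∈ S \ B := Finset.mem_sdiff.mpr ⟨ha, haB⟩
      refine ⟨a, haSB, ?_⟩
      simp only [haSB, if_pos]
      omega
    · intro a ha b hb hab
      have ha' := Finset.mem_sdiff.mp ha
      have hb' := Finset.mem_sdiff.mp hb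
      have hfa : (f a : ℕ) ≠ 0 := fun h => ha'.2 ((hB0 a).mpr ⟨ha'.1, h⟩)
      have hfb : (f b : ℕ) ≠ 0 := fun h => hb'.2 ((hB0 b).mpr ⟨hb'.1, h⟩)
      have := h3 a ha'.1 b hb'.1 hab
      simp only [ha, hb, if_pos]
      omega
  case hj =>
    intro g hg
    rw [Finset.mem_coe, Finset.mem_filter] at hg
    obtain ⟨-, h0, h1, h2, h3⟩ := hg
    have hval : ∀ a ∈ S \ B, (g a : ℕ) + 1 < N := fun a ha => by
      have := h1 a ha; omega
    rw [Finset.mem_coe, Finset.mem_filter, Finset.mem_filter]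
    refine ⟨⟨Finset.mem_univ _, ?_, ?_, ?_, ?_⟩, ?_⟩
    · intro a ha
      have : a ∉ S \ B := fun h => ha (Finset.mem_sdiff.mp h).1
      simp only [this, ite_false]
    · intro a ha
      by_cases hab : a ∈ S \ B
      · simp only [hab, if_pos, dif_pos (hval a hab)]
        have := h1 a hab; omega
      · simp only [hab, ite_false]; omega
    · intro v hv
      rcases Nat.eq_zero_or_pos v with rfl | hvpos
      · obtain ⟨b, hb⟩ := hBne
        have : b ∉ S \ B := fun h => (Finset.mem_sdiff.mp h).2 hb
        exact ⟨b, hBS hb, by simp only [this, ite_false]⟩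
      · obtain ⟨a, ha, hga⟩ := h2 (v - 1) (by omega)
        refine ⟨a, (Finset.mem_sdiff.mp ha).1, ?_⟩
        simp only [ha, if_pos, dif_pos (hval a ha)]
        omega
    · intro a ha b hb hab
      by_cases hbB : b ∈ B
      · exfalso
        have := hBMn hbB
        rw [hMn, Finset.mem_filter] at this
        exact this.2 a ha hab
      · have hbSB : b ∈ S \ B := Finset.mem_sdiff.mpr ⟨hb, hbB⟩
        by_cases haB : a ∈ B
        · have hnot : a ∉ S \ B := fun h => (Finset.mem_sdiff.mp h).2 haB
          simp only [hnot, ite_false, hbSB, if_pos, dif_pos (hval b hbSB)]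
          omega
        · have haSB : a ∈ S \ B := Finset.mem_sdiff.mpr ⟨ha, haB⟩
          have := h3 a haSB b hbSB hab
          simp only [haSB, hbSB, if_pos, dif_pos (hval a haSB), dif_pos (hval b hbSB)]
          omega
    · -- fiber condition
      ext a
      rw [Finset.mem_filter]
      constructor
      · rintro ⟨haS, hval0⟩
        by_contra haB
        have haSB : a ∈ S \ B := Finset.mem_sdiff.mpr ⟨haS, haB⟩
        simp only [haSB, if_pos, dif_pos (hval a haSB)] at hval0
        omega
      · intro haB
        have : a ∉ S \ B := fun h => (Finset.mem_sdiff.mp h).2 haB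
        exact ⟨hBS haB, by simp only [this, ite_false]⟩
  case hji =>
    intro f hf
    rw [Finset.mem_coe, Finset.mem_filter, Finset.mem_filter] at hf
    obtain ⟨⟨-, h0, h1, h2, h3⟩, hfib⟩ := hf
    have hB0 : ∀ a, a ∈ B ↔ (a ∈ S ∧ (f a : ℕ) = 0) := by
      intro a; rw [← hfib, Finset.mem_filter]
    funext a
    apply Fin.ext
    by_cases haSB : a ∈ S \ B
    · have ha' := Finset.mem_sdiff.mp haSB
      have hfa : (f a : ℕ) ≠ 0 := fun h => ha'.2 ((hB0 a).mpr ⟨ha'.1, h⟩)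
      have hlt : (f a : ℕ) - 1 + 1 < N := by
        have := (f a).isLt; omega
      simp only [haSB, if_pos, dif_pos hlt]
      omega
    · simp only [haSB, ite_false]
      by_cases haS : a ∈ S
      · have haB : a ∈ B := by
          by_contra hc; exact haSB (Finset.mem_sdiff.mpr ⟨haS, hc⟩)
        have := (hB0 a).mp haB
        omega
      · have := h0 a haS
        omega
  case hij =>
    intro g hg
    rw [Finset.mem_coe, Finset.mem_filter] at hg
    obtain ⟨-, h0, h1, h2, h3⟩ := hg
    funext a
    apply Fin.ext
    by_cases haSB : a ∈ S \ B
    · have hlt : (g a : ℕ) + 1 < N := by have := h1 a haSB; omega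
      simp only [haSB, if_pos, dif_pos hlt]
      omega
    · simp only [haSB, ite_false]
      have := h0 a haSB
      omega


lemma neg_one_pow_sub {a b : ℕ} (h : b ≤ a) : (-1 : ℚ) ^ (a - b) = (-1) ^ a * (-1) ^ b := by
  have : (-1 : ℚ) ^ a = (-1) ^ (a - b) * (-1) ^ b := by
    rw [← pow_add, Nat.sub_add_cancel h]
  rw [this, mul_assoc, ← pow_add, Even.neg_one_pow ⟨b, rfl⟩, mul_one]

lemma alt_sum (R : Fin n → Fin n → Prop) (hNn : n ≤ N)
    (hR : ∀ a, ¬ Relation.TransGen R a a) (S : Finset (Fin n)) :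
    ∑ k ∈ range (n + 1), (-1 : ℚ) ^ k * cnt (N := N) R S k = (-1) ^ #S := by
  induction S using Finset.strongInduction with
  | _ S ih =>
  rcases Finset.eq_empty_or_nonempty S with rfl | hSne
  · have h1 : cnt (N := N) R ∅ 0 = 1 := by
      rw [cnt]
      have : (univ : Finset (Fin n → Fin N)).filter (Good R ∅ 0) =
          {fun a => ⟨0, Nat.lt_of_le_of_lt (Nat.zero_le _) (lt_of_lt_of_le a.isLt hNn)⟩} := by
        ext f
        rw [Finset.mem_filter, Finset.mem_singleton]
        constructor
        · rintro ⟨-, h0, -, -, -⟩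
          funext a
          exact Fin.ext (h0 a (Finset.notMem_empty a))
        · rintro rfl
          exact ⟨Finset.mem_univ _, fun a _ => rfl,
            fun a ha => absurd ha (Finset.notMem_empty a),
            fun v hv => absurd hv (Nat.not_lt_zero v),
            fun a ha => absurd ha (Finset.notMem_empty a)⟩
      rw [this, Finset.card_singleton]
    rw [Finset.sum_eq_single 0]
    · simp [h1]
    · intro k _ hk
      rw [cnt_eq_zero R (by simpa using Nat.pos_of_ne_zero hk), Nat.cast_zero, mul_zero]
    · intro h; exact absurd (Finset.mem_range.mpr (by omega)) h
  · -- inductive step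
    haveI : IsTrans (Fin n) (Relation.TransGen R) := ⟨fun _ _ _ => Relation.TransGen.trans⟩
    haveI : IsIrrefl (Fin n) (Relation.TransGen R) := ⟨hR⟩
    have wf := Finite.wellFounded_of_trans_of_irrefl (Relation.TransGen R)
    obtain ⟨m, hmS, hmin⟩ := wf.has_min ↑S (Finset.coe_nonempty.mpr hSne)
    set Mn := S.filter fun a => ∀ b ∈ S, ¬ R b a with hMndef
    have hMne : Mn.Nonempty :=
      ⟨m, Finset.mem_filter.mpr ⟨hmS, fun b hb hR' => hmin b hb (Relation.TransGen.single hR')⟩⟩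
    set 𝔅 := Mn.powerset.filter fun B => B.Nonempty with h𝔅
    have hS_le : #S ≤ n := le_trans (Finset.card_le_univ S) (by simp)
    have hcard : ∀ B ∈ 𝔅, #(S \ B) = #S - #B ∧ 1 ≤ #B ∧ B ⊆ S := by
      intro B hB
      rw [h𝔅, Finset.mem_filter, Finset.mem_powerset] at hB
      have hBS : B ⊆ S := hB.1.trans (Finset.filter_subset _ _)
      exact ⟨Finset.card_sdiff_of_subset hBS, Finset.card_pos.mpr hB.2, hBS⟩
    rw [Finset.sum_range_succ']
    have hc0 : cnt (N := N) R S 0 = 0 := by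
      rw [cnt, Finset.card_eq_zero, Finset.filter_eq_empty_iff]
      intro f _ hG
      obtain ⟨a, haS⟩ := hSne
      exact absurd (hG.2.1 a haS) (by omega)
    rw [hc0]
    simp only [Nat.cast_zero, mul_zero, add_zero]
    have hstep : ∀ k ∈ range n, (-1 : ℚ) ^ (k + 1) * (cnt (N := N) R S (k + 1) : ℚ)
        = ∑ B ∈ 𝔅, -((-1 : ℚ) ^ k * cnt (N := N) R (S \ B) k) := by
      intro k hk
      rw [Finset.mem_range] at hk
      rw [cnt_succ R S k (by omega), Nat.cast_sum, Finset.mul_sum]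
      refine Finset.sum_congr rfl fun B _ => ?_
      rw [pow_succ]
      ring
    rw [Finset.sum_congr rfl hstep, Finset.sum_comm]
    have hinner : ∀ B ∈ 𝔅, ∑ k ∈ range n, -((-1 : ℚ) ^ k * cnt (N := N) R (S \ B) k)
        = -(-1 : ℚ) ^ (#S - #B) := by
      intro B hB
      obtain ⟨hcB, hB1, hBS⟩ := hcard B hB
      have hSpos : 0 < #S := Finset.card_pos.mpr hSne
      have hBle : #B ≤ #S := Finset.card_le_card hBS
      have hssub : S \ B ⊂ S := by
        refine Finset.sdiff_ssubset hBS ?_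
        exact Finset.card_pos.mp (by omega)
      have hih := ih (S \ B) hssub
      have hlast : cnt (N := N) R (S \ B) n = 0 := cnt_eq_zero R (by omega)
      rw [Finset.sum_neg_distrib]
      have : ∑ k ∈ range n, (-1 : ℚ) ^ k * cnt (N := N) R (S \ B) k
          = (-1 : ℚ) ^ #(S \ B) := by
        rw [← hih, Finset.sum_range_succ, hlast, Nat.cast_zero, mul_zero, add_zero]
      rw [this, hcB]
    rw [Finset.sum_congr rfl hinner]
    have hsum𝔅 : ∑ B ∈ 𝔅, (-1 : ℚ) ^ #B = -1 := by
      have h0' : ∑ B ∈ Mn.powerset, (-1 : ℤ) ^ #B = 0 := by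
        rw [Finset.sum_powerset_neg_one_pow_card]
        simp [Finset.nonempty_iff_ne_empty.mp hMne]
      have h0 : ∑ B ∈ Mn.powerset, (-1 : ℚ) ^ #B = 0 := by
        have := congrArg (fun z : ℤ => (z : ℚ)) h0'
        push_cast at this
        exact this
      have hsplit := Finset.sum_filter_add_sum_filter_not Mn.powerset
        (fun B => B.Nonempty) (fun B => (-1 : ℚ) ^ #B)
      have hnot : Mn.powerset.filter (fun B => ¬ B.Nonempty) = {∅} := by
        ext B
        rw [Finset.mem_filter, Finset.mem_powerset, Finset.mem_singleton,
          Finset.not_nonempty_iff_eq_empty]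
        constructor
        · rintro ⟨-, h⟩; exact h
        · rintro rfl; exact ⟨Finset.empty_subset _, rfl⟩
      rw [hnot, Finset.sum_singleton, Finset.card_empty, pow_zero] at hsplit
      rw [h0] at hsplit
      rw [h𝔅]
      linarith
    calc ∑ B ∈ 𝔅, -(-1 : ℚ) ^ (#S - #B)
        = ∑ B ∈ 𝔅, (-(-1 : ℚ) ^ #S) * (-1) ^ #B := by
          refine Finset.sum_congr rfl fun B hB => ?_
          obtain ⟨-, hB1, hBS⟩ := hcard B hB
          rw [neg_one_pow_sub (le_trans (Finset.card_le_card hBS) (le_refl _))]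
          ring
      _ = (-(-1 : ℚ) ^ #S) * ∑ B ∈ 𝔅, (-1 : ℚ) ^ #B := by rw [Finset.mul_sum]
      _ = (-1 : ℚ) ^ #S := by rw [hsum𝔅]; ring




lemma sum_powerset_neg_one_pow_card_rat {α : Type*} [DecidableEq α] (M : Finset α) :
    ∑ A ∈ M.powerset, (-1 : ℚ) ^ #A = if M = ∅ then 1 else 0 := by
  have h' : ∑ A ∈ M.powerset, (-1 : ℤ) ^ #A = if M = ∅ then 1 else 0 :=
    Finset.sum_powerset_neg_one_pow_card
  have := congrArg (fun z : ℤ => (z : ℚ)) h'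
  push_cast at this
  rw [this]

lemma sum_powerset_choose {α : Type*} [DecidableEq α] (M : Finset α) (j : ℕ) :
    ∑ A ∈ M.powerset, (-1 : ℚ) ^ #A * ((#A).choose j : ℚ)
      = (-1) ^ j * (if #M = j then 1 else 0) := by
  have hchoose : ∀ A ∈ M.powerset, (-1 : ℚ) ^ #A * ((#A).choose j : ℚ)
      = ∑ B ∈ A.powersetCard j, (-1 : ℚ) ^ #A := by
    intro A _
    rw [Finset.sum_const, Finset.card_powersetCard, nsmul_eq_mul, mul_comm]
  rw [Finset.sum_congr rfl hchoose]
  rw [Finset.sum_comm' (t' := M.powersetCard j)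
    (s' := fun B => M.powerset.filter fun A => B ⊆ A) ?hcomm]
  case hcomm =>
    intro A B
    simp only [Finset.mem_powerset, Finset.mem_powersetCard, Finset.mem_filter]
    constructor
    · rintro ⟨hAM, hBA, hBj⟩
      exact ⟨⟨hAM, hBA⟩, hBA.trans hAM, hBj⟩
    · rintro ⟨⟨hAM, hBA⟩, hBM, hBj⟩
      exact ⟨hAM, hBA, hBj⟩
  have hinner : ∀ B ∈ M.powersetCard j,
      ∑ A ∈ M.powerset.filter (fun A => B ⊆ A), (-1 : ℚ) ^ #A
        = (-1 : ℚ) ^ #B * (if M = B then 1 else 0) := by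
    intro B hB
    rw [Finset.mem_powersetCard] at hB
    obtain ⟨hBM, hBj⟩ := hB
    have hbij : ∑ A ∈ M.powerset.filter (fun A => B ⊆ A), (-1 : ℚ) ^ #A
        = ∑ C ∈ (M \ B).powerset, (-1 : ℚ) ^ (#C + #B) := by
      refine Finset.sum_nbij' (i := fun A => A \ B) (j := fun C => C ∪ B) ?_ ?_ ?_ ?_ ?_
      · intro A hA
        rw [Finset.mem_filter, Finset.mem_powerset] at hA
        rw [Finset.mem_powerset]
        exact Finset.sdiff_subset_sdiff hA.1 (Finset.Subset.refl B)
      · intro C hC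
        rw [Finset.mem_powerset] at hC
        rw [Finset.mem_filter, Finset.mem_powerset]
        refine ⟨Finset.union_subset (hC.trans Finset.sdiff_subset) hBM,
          Finset.subset_union_right⟩
      · intro A hA
        rw [Finset.mem_filter] at hA
        exact Finset.sdiff_union_of_subset hA.2
      · intro C hC
        rw [Finset.mem_powerset] at hC
        have hdisj : Disjoint C B := Finset.disjoint_of_subset_left hC Finset.sdiff_disjoint
        show (C ∪ B) \ B = C
        rw [Finset.union_sdiff_distrib, Finset.sdiff_self, Finset.union_empty,
          Finset.sdiff_eq_self_of_disjoint hdisj]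
      · intro A hA
        rw [Finset.mem_filter] at hA
        rw [Finset.card_sdiff_add_card_eq_card hA.2]
    rw [hbij]
    have : ∀ C ∈ (M \ B).powerset, (-1 : ℚ) ^ (#C + #B) = (-1 : ℚ) ^ #B * (-1) ^ #C := by
      intro C _; rw [pow_add]; ring
    rw [Finset.sum_congr rfl this, ← Finset.mul_sum, sum_powerset_neg_one_pow_card_rat]
    congr 1
    have : M \ B = ∅ ↔ M = B := by
      rw [Finset.sdiff_eq_empty_iff_subset]
      constructor
      · intro h; exact Finset.Subset.antisymm h hBM
      · rintro rfl; exact Finset.Subset.refl _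
    simp only [this]
  rw [Finset.sum_congr rfl hinner]
  by_cases hMj : #M = j
  · rw [if_pos hMj]
    rw [Finset.sum_eq_single M]
    · rw [if_pos rfl, hMj, mul_one]
    · intro B hB hBM
      rw [if_neg (Ne.symm hBM), mul_zero]
    · intro hM
      exfalso
      exact hM (Finset.mem_powersetCard.mpr ⟨Finset.Subset.refl _, hMj⟩)
  · rw [if_neg hMj]
    rw [Finset.sum_eq_zero, mul_zero]
    intro B hB
    rw [Finset.mem_powersetCard] at hB
    have : M ≠ B := fun h => hMj (h ▸ hB.2)
    rw [if_neg this, mul_zero]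





/-- Compatibility of a coloring with a relation. -/
def Cp (R : Fin n → Fin n → Prop) (f : Fin n → Fin N) : Prop :=
  ∀ a b, R a b → (f a : ℕ) < (f b : ℕ)

/-- `X̄_R`: sum of monomials of compatible colorings. -/
noncomputable def Xbar (R : Fin n → Fin n → Prop) (N : ℕ) : MvPolynomial (Fin N) ℚ :=
  ∑ f ∈ (univ : Finset (Fin n → Fin N)).filter (Cp R), MvPolynomial.monomial (cont f) 1

def Seg {n N : ℕ} (f : Fin n → Fin N) : Prop :=
  ∀ r s : Fin N, r ≤ s → s ∈ (cont f).support → r ∈ (cont f).support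

noncomputable def KV {n N : ℕ} (f : Fin n → Fin N) : ℕ := (cont f).support.sup Fin.val

noncomputable def topF {n N : ℕ} (f : Fin n → Fin N) : Finset (Fin n) :=
  univ.filter fun a => (f a : ℕ) = KV f

lemma max'_val_eq_sup {N : ℕ} (S : Finset (Fin N)) (h : S.Nonempty) :
    ((S.max' h : Fin N) : ℕ) = S.sup Fin.val := by
  apply le_antisymm
  · exact Finset.le_sup (S.max'_mem h)
  · exact Finset.sup_le fun b hb => by exact_mod_cast S.le_max' b hb

lemma supp_nonempty (hn : 0 < n) (f : Fin n → Fin N) : (cont f).support.Nonempty :=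
  ⟨f ⟨0, hn⟩, (mem_support_cont f _).mpr ⟨⟨0, hn⟩, rfl⟩⟩

lemma val_le_KV (f : Fin n → Fin N) (a : Fin n) : (f a : ℕ) ≤ KV f :=
  Finset.le_sup ((mem_support_cont f _).mpr ⟨a, rfl⟩)

lemma w_eq_of_seg (j : ℕ) (hn : 0 < n) (f : Fin n → Fin N) (hseg : Seg f) :
    w n j (cont f) = (-1) ^ (n - j) * (-1) ^ (KV f) * ((#(topF f)).choose j : ℚ) := by
  have hne := supp_nonempty hn f
  rw [w, dif_pos ⟨hne, hseg⟩]
  have hval : (((cont f).support.max' hne : Fin N) : ℕ) = KV f := max'_val_eq_sup _ hne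
  rw [hval]
  congr 2
  rw [cont_apply]
  have hset : (univ.filter fun i => f i = (cont f).support.max' hne) = topF f := by
    refine Finset.filter_congr fun a _ => ?_
    rw [← hval]
    constructor
    · intro h; rw [h]
    · intro h; exact Fin.ext (by simpa using h)
  rw [hset, topF]

lemma w_eq_zero_of_not_seg (j : ℕ) (f : Fin n → Fin N) (hseg : ¬ Seg f) :
    w n j (cont f) = 0 := by
  rw [w, dif_neg]
  intro hcon
  exact hseg hcon.2

lemma alt_sum_lt (R : Fin n → Fin n → Prop) (hNn : n ≤ N)
    (hR : ∀ a, ¬ Relation.TransGen R a a) {S : Finset (Fin n)} (hS : #S < n) :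
    ∑ k ∈ range N, (-1 : ℚ) ^ k * (cnt (N := N) R S k : ℚ) = (-1) ^ #S := by
  have hbig : ∑ k ∈ range (N + 1), (-1 : ℚ) ^ k * (cnt (N := N) R S k : ℚ) = (-1) ^ #S := by
    rw [← alt_sum R hNn hR S]
    symm
    apply Finset.sum_subset (Finset.range_subset_range.mpr (by omega))
    intro k hk hk'
    rw [Finset.mem_range, not_lt] at hk'
    rw [cnt_eq_zero R (by omega), Nat.cast_zero, mul_zero]
  rw [← hbig, Finset.sum_range_succ, cnt_eq_zero R (by omega), Nat.cast_zero,
    mul_zero, add_zero]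

lemma neg_one_pow_sub_mul {a b n : ℕ} (ha : a ≤ n) (hb : b ≤ n) :
    (-1 : ℚ) ^ (n - a) * (-1) ^ (n - b) = (-1) ^ a * (-1) ^ b := by
  rw [neg_one_pow_sub ha, neg_one_pow_sub hb]
  have h : (-1 : ℚ) ^ n * (-1) ^ n = 1 := by
    rw [← pow_add]; exact Even.neg_one_pow ⟨n, rfl⟩
  calc ((-1:ℚ)^n * (-1)^a) * ((-1)^n * (-1)^b)
      = ((-1:ℚ)^n * (-1)^n) * ((-1)^a * (-1)^b) := by ring
    _ = (-1)^a * (-1)^b := by rw [h, one_mul]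

/-- The main lemma: `L` applied to `X̄_R` detects the number of sinks. -/
lemma L_Xbar (R : Fin n → Fin n → Prop) (hn : 0 < n) (hNn : n ≤ N)
    (hR : ∀ a, ¬ Relation.TransGen R a a) (j : ℕ) (hj : 1 ≤ j) :
    L n j (Xbar (n := n) R N) =
      if #(univ.filter fun a : Fin n => ∀ b, ¬ R a b) = j then 1 else 0 := by
  have hN0 : 0 < N := lt_of_lt_of_le hn hNn
  -- Step 1: L of the sum of monomials
  have h1 : L n j (Xbar (n := n) R N)
      = ∑ f ∈ (univ : Finset (Fin n → Fin N)).filter (Cp R), w n j (cont f) := by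
    rw [Xbar, ← Lhom_apply, map_sum]
    exact Finset.sum_congr rfl fun f _ => by rw [Lhom_apply, L_monomial]
  rw [h1]
  -- Step 2: kill non-segment terms
  rw [← Finset.sum_filter_add_sum_filter_not (((univ : Finset (Fin n → Fin N))).filter (Cp R))
    Seg]
  rw [Finset.sum_eq_zero (fun f hf => w_eq_zero_of_not_seg j f (Finset.mem_filter.mp hf).2),
    add_zero]
  rw [Finset.filter_filter]
  rw [Finset.sum_congr rfl (fun f hf => w_eq_of_seg j hn f (Finset.mem_filter.mp hf).2.2)]
  -- the "j > n" case: every summand vanishes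
  by_cases hjn : j ≤ n
  swap
  · have hz : ∀ f ∈ (univ : Finset (Fin n → Fin N)).filter (fun f => Cp R f ∧ Seg f),
        (-1 : ℚ) ^ (n - j) * (-1) ^ (KV f) * ((#(topF f)).choose j : ℚ) = 0 := by
      intro f _
      have h1 : #(topF f) ≤ n := by
        have := Finset.card_le_univ (topF f); simpa using this
      have : #(topF f) < j := by omega
      rw [Nat.choose_eq_zero_of_lt this, Nat.cast_zero, mul_zero]
    rw [Finset.sum_eq_zero hz, if_neg]
    intro hc
    have : #(univ.filter fun a : Fin n => ∀ b, ¬ R a b) ≤ n := by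
      have := Finset.card_le_univ (univ.filter fun a : Fin n => ∀ b, ¬ R a b)
      simpa using this
    omega
  -- Step 3: fiberwise grouping over (top fiber, max value)
  set TA := (univ : Finset (Finset (Fin n))).filter
    (fun A => A.Nonempty ∧ ∀ a ∈ A, ∀ b, ¬ R a b) with hTAdef
  have hmaps : ∀ f ∈ (univ : Finset (Fin n → Fin N)).filter (fun f => Cp R f ∧ Seg f),
      (topF f, KV f) ∈ TA ×ˢ range N := by
    intro f hf
    obtain ⟨-, hcp, hseg⟩ := Finset.mem_filter.mp hf
    have hne := supp_nonempty hn f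
    have hkv : (((cont f).support.max' hne : Fin N) : ℕ) = KV f := max'_val_eq_sup _ hne
    rw [Finset.mem_product, Finset.mem_range]
    constructor
    · rw [hTAdef, Finset.mem_filter]
      refine ⟨Finset.mem_univ _, ?_, ?_⟩
      · obtain ⟨a, ha⟩ := (mem_support_cont f _).mp ((cont f).support.max'_mem hne)
        exact ⟨a, Finset.mem_filter.mpr ⟨Finset.mem_univ _, by rw [← hkv, ha]⟩⟩
      · intro a ha b hab
        rw [topF, Finset.mem_filter] at ha
        have h1 := hcp a b hab
        have h2 := val_le_KV f b
        omega
    · rw [← hkv]; exact ((cont f).support.max' hne).isLt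
  rw [← Finset.sum_fiberwise_of_maps_to hmaps]
  -- Step 4: compute each fiber
  have hfiber : ∀ p ∈ TA ×ˢ range N,
      ∑ f ∈ ((univ : Finset (Fin n → Fin N)).filter
          (fun f => Cp R f ∧ Seg f)).filter (fun f => (topF f, KV f) = p),
        (-1 : ℚ) ^ (n - j) * (-1) ^ (KV f) * ((#(topF f)).choose j : ℚ)
      = (cnt (N := N) R (univ \ p.1) p.2 : ℚ) *
          ((-1 : ℚ) ^ (n - j) * (-1) ^ p.2 * ((#(p.1)).choose j : ℚ)) := by
    rintro ⟨A, k⟩ hp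
    rw [Finset.mem_product, Finset.mem_range] at hp
    obtain ⟨hpA, hk⟩ := hp
    rw [hTAdef, Finset.mem_filter] at hpA
    obtain ⟨-, hAne, hAsink⟩ := hpA
    have hconst : ∀ f ∈ ((univ : Finset (Fin n → Fin N)).filter
        (fun f => Cp R f ∧ Seg f)).filter (fun f => (topF f, KV f) = (A, k)),
        (-1 : ℚ) ^ (n - j) * (-1) ^ (KV f) * ((#(topF f)).choose j : ℚ)
        = (-1 : ℚ) ^ (n - j) * (-1) ^ k * ((#A).choose j : ℚ) := by
      intro f hf
      have := (Finset.mem_filter.mp hf).2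
      rw [Prod.mk.injEq] at this
      rw [this.1, this.2]
    rw [Finset.sum_congr rfl hconst, Finset.sum_const, nsmul_eq_mul]
    congr 1
    -- the bijection: fiber ↔ Good maps on univ \ A
    rw [cnt]
    norm_cast
    refine Finset.card_nbij'
      (i := fun f a => if a ∈ A then (⟨0, hN0⟩ : Fin N) else f a)
      (j := fun g a => if a ∈ A then (⟨k, hk⟩ : Fin N) else g a) ?_ ?_ ?_ ?_
    · -- maps into Good
      intro f hf
      rw [Finset.mem_coe, Finset.mem_filter, Finset.mem_filter, Prod.mk.injEq] at hf
      obtain ⟨⟨-, hcp, hseg⟩, htop, hKV⟩ := hf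
      have hmemA : ∀ a, a ∈ A ↔ (f a : ℕ) = k := by
        intro a
        rw [← htop, topF, Finset.mem_filter, hKV]
        simp
      rw [Finset.mem_coe, Finset.mem_filter]
      refine ⟨Finset.mem_univ _, ?_, ?_, ?_, ?_⟩
      · intro a ha
        have haA : a ∈ A := by
          by_contra h
          exact ha (Finset.mem_sdiff.mpr ⟨Finset.mem_univ _, h⟩)
        simp [haA]
      · intro a ha
        have haA : a ∉ A := (Finset.mem_sdiff.mp ha).2
        have h1 : (f a : ℕ) ≤ k := by rw [← hKV]; exact val_le_KV f a
        have h2 : (f a : ℕ) ≠ k := fun h => haA ((hmemA a).mpr h)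
        simp only [haA, ite_false]
        omega
      · intro v hv
        have hvN : v < N := lt_trans hv hk
        have hne := supp_nonempty hn f
        have hkv' : (((cont f).support.max' hne : Fin N) : ℕ) = KV f := max'_val_eq_sup _ hne
        have hmem : (⟨v, hvN⟩ : Fin N) ∈ (cont f).support := by
          apply hseg _ _ _ ((cont f).support.max'_mem hne)
          rw [Fin.le_def]
          simp only [hkv', hKV]
          omega
        obtain ⟨a, ha⟩ := (mem_support_cont f _).mp hmem
        have haval : (f a : ℕ) = v := by rw [ha]
        have haA : a ∉ A := fun h => by
          have := (hmemA a).mp h; omega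
        refine ⟨a, Finset.mem_sdiff.mpr ⟨Finset.mem_univ _, haA⟩, ?_⟩
        simp only [haA, ite_false]
        exact haval
      · intro a ha b hb hab
        have haA : a ∉ A := (Finset.mem_sdiff.mp ha).2
        have hbA : b ∉ A := (Finset.mem_sdiff.mp hb).2
        simp only [haA, hbA, ite_false]
        exact hcp a b hab
    · -- maps back into the fiber
      intro g hg
      rw [Finset.mem_coe, Finset.mem_filter] at hg
      obtain ⟨-, h0, h1, h2, h3⟩ := hg
      set f' : Fin n → Fin N := fun a => if a ∈ A then (⟨k, hk⟩ : Fin N) else g a with hf'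
      have hvA : ∀ a ∈ A, (f' a : ℕ) = k := by
        intro a ha; rw [hf']; simp [ha]
      have hvNA : ∀ a, a ∉ A → f' a = g a := by
        intro a ha; rw [hf']; simp [ha]
      have hgval : ∀ a, a ∉ A → (g a : ℕ) < k := fun a ha =>
        h1 a (Finset.mem_sdiff.mpr ⟨Finset.mem_univ _, ha⟩)
      have hvle : ∀ a, (f' a : ℕ) ≤ k := by
        intro a
        by_cases ha : a ∈ A
        · rw [hvA a ha]
        · rw [hvNA a ha]; exact le_of_lt (hgval a ha)
      have hKVg : KV f' = k := by
        apply le_antisymm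
        · apply Finset.sup_le
          intro u hu
          obtain ⟨a, ha⟩ := (mem_support_cont _ _).mp hu
          rw [← ha]; exact hvle a
        · obtain ⟨a, haA⟩ := hAne
          have hmem : (⟨k, hk⟩ : Fin N) ∈ (cont f').support :=
            (mem_support_cont _ _).mpr ⟨a, by rw [hf']; simp [haA]⟩
          exact Finset.le_sup (f := Fin.val) hmem
      show f' ∈ _
      rw [Finset.mem_coe, Finset.mem_filter, Finset.mem_filter, Prod.mk.injEq]
      refine ⟨⟨Finset.mem_univ _, ?_, ?_⟩, ?_, hKVg⟩
      · -- compatible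
        intro a b hab
        by_cases haA : a ∈ A
        · exact absurd hab (hAsink a haA b)
        · by_cases hbA : b ∈ A
          · rw [hvA b hbA, hvNA a haA]
            exact hgval a haA
          · rw [hvNA a haA, hvNA b hbA]
            exact h3 a (Finset.mem_sdiff.mpr ⟨Finset.mem_univ _, haA⟩)
              b (Finset.mem_sdiff.mpr ⟨Finset.mem_univ _, hbA⟩) hab
      · -- segment
        intro r s hrs hs
        obtain ⟨a, ha⟩ := (mem_support_cont _ _).mp hs
        rw [mem_support_cont]
        have hrk : (r : ℕ) ≤ k := by
          have hs0 : (s : ℕ) ≤ k := by rw [← ha]; exact hvle a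
          have := Fin.le_def.mp hrs
          omega
        rcases Nat.lt_or_ge (r : ℕ) k with hlt | hge
        · obtain ⟨b, hb, hgb⟩ := h2 (r : ℕ) hlt
          have hbA : b ∉ A := (Finset.mem_sdiff.mp hb).2
          refine ⟨b, ?_⟩
          rw [hvNA b hbA]
          exact Fin.ext hgb
        · have hrk' : (r : ℕ) = k := by omega
          obtain ⟨a', haA⟩ := hAne
          refine ⟨a', ?_⟩
          have := hvA a' haA
          exact Fin.ext (by omega)
      · -- top fiber is A
        rw [topF, hKVg]
        ext a
        rw [Finset.mem_filter]
        constructor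
        · rintro ⟨-, hval0⟩
          by_contra haA
          rw [hvNA a haA] at hval0
          exact absurd hval0 (by have := hgval a haA; omega)
        · intro haA
          exact ⟨Finset.mem_univ _, hvA a haA⟩
    · -- left inverse
      intro f hf
      rw [Finset.mem_coe, Finset.mem_filter, Finset.mem_filter, Prod.mk.injEq] at hf
      obtain ⟨⟨-, hcp, hseg⟩, htop, hKV⟩ := hf
      have hmemA : ∀ a, a ∈ A ↔ (f a : ℕ) = k := by
        intro a
        rw [← htop, topF, Finset.mem_filter, hKV]
        simp
      funext a
      show (if a ∈ A then (⟨k, hk⟩ : Fin N)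
        else (if a ∈ A then (⟨0, hN0⟩ : Fin N) else f a)) = f a
      by_cases haA : a ∈ A
      · simp only [haA, ite_true]
        exact Fin.ext (by simpa using ((hmemA a).mp haA).symm)
      · simp only [haA, ite_false]
    · -- right inverse
      intro g hg
      rw [Finset.mem_coe, Finset.mem_filter] at hg
      obtain ⟨-, h0, h1, h2, h3⟩ := hg
      funext a
      show (if a ∈ A then (⟨0, hN0⟩ : Fin N)
        else (if a ∈ A then (⟨k, hk⟩ : Fin N) else g a)) = g a
      by_cases haA : a ∈ A
      · simp only [haA, ite_true]
        have hga : (g a : ℕ) = 0 := h0 a (fun h => (Finset.mem_sdiff.mp h).2 haA)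
        exact Fin.ext (by simp [hga])
      · simp only [haA, ite_false]
  rw [Finset.sum_congr rfl hfiber]
  rw [Finset.sum_product]
  -- Step 5: sum over k using alt_sum, then over A
  have hinner : ∀ A ∈ TA, (∑ k ∈ range N, (cnt (N := N) R (univ \ A) k : ℚ) *
      ((-1 : ℚ)^(n-j) * (-1)^k * ((#A).choose j : ℚ)))
      = (-1 : ℚ)^(n-j) * (-1)^(n - #A) * ((#A).choose j : ℚ) := by
    intro A hA
    rw [hTAdef, Finset.mem_filter] at hA
    obtain ⟨-, hAne, -⟩ := hA
    have hAcard : #(univ \ A) + #A = n := by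
      rw [Finset.card_sdiff_add_card_eq_card (Finset.subset_univ A), Finset.card_univ,
        Fintype.card_fin]
    have hApos : 0 < #A := Finset.card_pos.mpr hAne
    have h1 : (∑ k ∈ range N, (cnt (N := N) R (univ \ A) k : ℚ) *
        ((-1 : ℚ)^(n-j) * (-1)^k * ((#A).choose j : ℚ)))
        = ((-1 : ℚ)^(n-j) * ((#A).choose j : ℚ)) *
            ∑ k ∈ range N, (-1:ℚ)^k * (cnt (N := N) R (univ \ A) k : ℚ) := by
      rw [Finset.mul_sum]
      exact Finset.sum_congr rfl fun k _ => by ring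
    rw [h1, alt_sum_lt R hNn hR (by omega),
      show #(univ \ A) = n - #A from by omega]
    ring
  rw [Finset.sum_congr rfl hinner]
  set Sk := univ.filter (fun a : Fin n => ∀ b, ¬ R a b) with hSk
  have hTA2 : TA = Sk.powerset.filter (fun A => A.Nonempty) := by
    ext A
    rw [hTAdef, Finset.mem_filter, Finset.mem_filter, Finset.mem_powerset]
    constructor
    · rintro ⟨-, hne, hsink⟩
      exact ⟨fun a ha => Finset.mem_filter.mpr ⟨Finset.mem_univ _, hsink a ha⟩, hne⟩
    · rintro ⟨hsub, hne⟩
      exact ⟨Finset.mem_univ _, hne, fun a ha b => (Finset.mem_filter.mp (hsub ha)).2 b⟩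
  rw [hTA2]
  have hSkn : #Sk ≤ n := by have := Finset.card_le_univ Sk; simpa using this
  have hsum_eq : (∑ A ∈ Sk.powerset.filter (fun A => A.Nonempty),
      (-1:ℚ)^(n-j) * (-1)^(n-#A) * ((#A).choose j : ℚ))
      = ∑ A ∈ Sk.powerset, (-1:ℚ)^(n-j) * (-1)^(n-#A) * ((#A).choose j : ℚ) := by
    rw [← Finset.sum_filter_add_sum_filter_not Sk.powerset (fun A => A.Nonempty)
      (fun A => (-1:ℚ)^(n-j) * (-1)^(n-#A) * ((#A).choose j : ℚ))]
    have hnot : Sk.powerset.filter (fun A => ¬ A.Nonempty) = {∅} := by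
      ext B
      rw [Finset.mem_filter, Finset.mem_powerset, Finset.mem_singleton,
        Finset.not_nonempty_iff_eq_empty]
      exact ⟨fun h => h.2, fun h => ⟨h ▸ Finset.empty_subset _, h⟩⟩
    rw [hnot, Finset.sum_singleton, Finset.card_empty,
      Nat.choose_eq_zero_of_lt (by omega : 0 < j), Nat.cast_zero, mul_zero, add_zero]
  rw [hsum_eq]
  have hterm : ∀ A ∈ Sk.powerset, (-1:ℚ)^(n-j) * (-1)^(n-#A) * ((#A).choose j : ℚ)
      = (-1:ℚ)^j * ((-1)^#A * ((#A).choose j : ℚ)) := by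
    intro A hA
    rw [Finset.mem_powerset] at hA
    have hAn : #A ≤ n := le_trans (Finset.card_le_card hA) hSkn
    have := neg_one_pow_sub_mul (n := n) hjn hAn
    calc (-1:ℚ)^(n-j) * (-1)^(n-#A) * ((#A).choose j : ℚ)
        = ((-1:ℚ)^(n-j) * (-1)^(n-#A)) * ((#A).choose j : ℚ) := by ring
      _ = ((-1:ℚ)^j * (-1)^#A) * ((#A).choose j : ℚ) := by rw [this]
      _ = (-1:ℚ)^j * ((-1)^#A * ((#A).choose j : ℚ)) := by ring
  rw [Finset.sum_congr rfl hterm, ← Finset.mul_sum, sum_powerset_choose]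
  rw [← mul_assoc, ← pow_add, Even.neg_one_pow ⟨j, rfl⟩, one_mul]




/-- Offsets of the blocks of the partition `p`. -/
noncomputable def off (p : Fin n → Fin (n + 1)) (i : Fin n) : ℕ :=
  ∑ i' ∈ univ.filter (fun i' => i' < i), (p i' : ℕ)

/-- The disjoint-union-of-chains relation determined by `p`. -/
def Rp (p : Fin n → Fin (n + 1)) (a b : Fin n) : Prop :=
  (a : ℕ) < (b : ℕ) ∧ ∃ i : Fin n, off p i ≤ (a : ℕ) ∧ (b : ℕ) < off p i + (p i : ℕ)

lemma Rp_lt {p : Fin n → Fin (n + 1)} {a b : Fin n} (h : Rp p a b) : (a : ℕ) < (b : ℕ) := h.1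

lemma off_add (p : Fin n → Fin (n + 1)) (i : Fin n) :
    off p i + (p i : ℕ) = ∑ i' ∈ univ.filter (fun i' => i' ≤ i), (p i' : ℕ) := by
  have hins : univ.filter (fun i' => i' ≤ i) = insert i (univ.filter (fun i' => i' < i)) := by
    ext i'
    simp only [Finset.mem_filter, Finset.mem_univ, true_and, Finset.mem_insert]
    rw [le_iff_lt_or_eq]
    tauto
  rw [hins, Finset.sum_insert (by simp), off, add_comm]

lemma off_add_le_of_lt (p : Fin n → Fin (n + 1)) {i i' : Fin n} (h : (i : ℕ) < (i' : ℕ)) :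
    off p i + (p i : ℕ) ≤ off p i' := by
  rw [off_add, off]
  apply Finset.sum_le_sum_of_subset
  intro i'' hi''
  rw [Finset.mem_filter] at hi'' ⊢
  refine ⟨hi''.1, ?_⟩
  have := hi''.2
  rw [Fin.le_def] at this
  rw [Fin.lt_def]
  omega

lemma off_add_le_n (p : Fin n → Fin (n + 1)) (hsum : ∑ i, (p i : ℕ) = n) (i : Fin n) :
    off p i + (p i : ℕ) ≤ n := by
  rw [off_add]
  calc ∑ i' ∈ univ.filter (fun i' => i' ≤ i), (p i' : ℕ)
      ≤ ∑ i', (p i' : ℕ) := Finset.sum_le_sum_of_subset (Finset.filter_subset _ _)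
    _ = n := hsum

lemma off_zero (p : Fin n → Fin (n + 1)) (hn : 0 < n) : off p ⟨0, hn⟩ = 0 := by
  rw [off]
  convert Finset.sum_empty
  rw [Finset.filter_eq_empty_iff]
  intro i' _
  simp [Fin.lt_def]

/-- The block index of a vertex. -/
noncomputable def idx (hn : 0 < n) (p : Fin n → Fin (n + 1)) (a : Fin n) : Fin n :=
  (univ.filter fun i => off p i ≤ (a : ℕ)).max'
    ⟨⟨0, hn⟩, Finset.mem_filter.mpr ⟨Finset.mem_univ _, by rw [off_zero p hn]; omega⟩⟩

lemma idx_le (hn : 0 < n) (p : Fin n → Fin (n + 1)) (a : Fin n) :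
    off p (idx hn p a) ≤ (a : ℕ) := by
  have := Finset.max'_mem (univ.filter fun i => off p i ≤ (a : ℕ))
    ⟨⟨0, hn⟩, Finset.mem_filter.mpr ⟨Finset.mem_univ _, by rw [off_zero p hn]; omega⟩⟩
  exact (Finset.mem_filter.mp this).2

lemma idx_lt (hn : 0 < n) (p : Fin n → Fin (n + 1)) (hsum : ∑ i, (p i : ℕ) = n) (a : Fin n) :
    (a : ℕ) < off p (idx hn p a) + (p (idx hn p a) : ℕ) := by
  by_contra hcon
  rw [not_lt] at hcon
  set i := idx hn p a with hidef
  by_cases hsucc : (i : ℕ) + 1 < n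
  · have hoff : off p ⟨(i : ℕ) + 1, hsucc⟩ = off p i + (p i : ℕ) := by
      rw [off_add, off]
      congr 1
      ext i'
      simp only [Finset.mem_filter, Finset.mem_univ, true_and]
      rw [Fin.lt_def, Fin.le_def]
      show (i' : ℕ) < (i : ℕ) + 1 ↔ (i' : ℕ) ≤ (i : ℕ)
      omega
    have hmem : (⟨(i : ℕ) + 1, hsucc⟩ : Fin n) ∈ univ.filter fun i' => off p i' ≤ (a : ℕ) := by
      rw [Finset.mem_filter]
      exact ⟨Finset.mem_univ _, by rw [hoff]; omega⟩
    have := Finset.le_max' _ _ hmem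
    rw [Fin.le_def] at this
    have h2 : (i : ℕ) + 1 ≤ (i : ℕ) := this
    omega
  · -- i is the last index
    have hlast : ∀ i' : Fin n, ¬ (i < i') := by
      intro i' hi'
      rw [Fin.lt_def] at hi'
      have := i'.isLt
      omega
    have hsplit := Finset.sum_filter_add_sum_filter_not (univ : Finset (Fin n))
      (fun i' => i' ≤ i) (fun i' => (p i' : ℕ))
    have hempty : (univ : Finset (Fin n)).filter (fun i' => ¬ i' ≤ i) = ∅ := by
      rw [Finset.filter_eq_empty_iff]
      intro i' _ h
      exact hlast i' (lt_of_not_ge h)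
    rw [hempty, Finset.sum_empty, add_zero, hsum, ← off_add] at hsplit
    have := a.isLt
    omega

lemma blk_unique (p : Fin n → Fin (n + 1)) {x : ℕ} {i i' : Fin n}
    (h : off p i ≤ x ∧ x < off p i + (p i : ℕ))
    (h' : off p i' ≤ x ∧ x < off p i' + (p i' : ℕ)) : i = i' := by
  rcases lt_trichotomy (i : ℕ) (i' : ℕ) with hlt | heq | hgt
  · have := off_add_le_of_lt p hlt
    omega
  · exact Fin.ext heq
  · have := off_add_le_of_lt p hgt
    omega

lemma idx_eq_iff (hn : 0 < n) (p : Fin n → Fin (n + 1)) (hsum : ∑ i, (p i : ℕ) = n)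
    (a : Fin n) (i : Fin n) :
    idx hn p a = i ↔ (off p i ≤ (a : ℕ) ∧ (a : ℕ) < off p i + (p i : ℕ)) := by
  constructor
  · rintro rfl
    exact ⟨idx_le hn p a, idx_lt hn p hsum a⟩
  · intro h
    exact blk_unique p ⟨idx_le hn p a, idx_lt hn p hsum a⟩ h

lemma Rp_iff (hn : 0 < n) (p : Fin n → Fin (n + 1)) (hsum : ∑ i, (p i : ℕ) = n)
    (a b : Fin n) :
    Rp p a b ↔ (idx hn p a = idx hn p b ∧ (a : ℕ) < (b : ℕ)) := by
  constructor
  · rintro ⟨hab, i, h1, h2⟩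
    have hai : idx hn p a = i := (idx_eq_iff hn p hsum a i).mpr ⟨h1, by omega⟩
    have hbi : idx hn p b = i := (idx_eq_iff hn p hsum b i).mpr ⟨by omega, h2⟩
    exact ⟨hai.trans hbi.symm, hab⟩
  · rintro ⟨heq, hab⟩
    refine ⟨hab, idx hn p a, idx_le hn p a, ?_⟩
    have := idx_lt hn p hsum b
    rw [← heq] at this
    omega

lemma Rp_transGen_lt {p : Fin n → Fin (n + 1)} {a b : Fin n}
    (h : Relation.TransGen (Rp p) a b) : (a : ℕ) < (b : ℕ) := by
  induction h with
  | single h' => exact h'.1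
  | tail _ h' ih => exact lt_trans ih h'.1

lemma Rp_acyclic' (p : Fin n → Fin (n + 1)) : ∀ a, ¬ Relation.TransGen (Rp p) a a :=
  fun a h => absurd (Rp_transGen_lt h) (lt_irrefl _)

/-- The top element of a nonempty block. -/
noncomputable def topv (hn : 0 < n) (p : Fin n → Fin (n + 1)) (i : Fin n) : Fin n :=
  if h : off p i + (p i : ℕ) ≤ n ∧ 0 < (p i : ℕ)
  then ⟨off p i + (p i : ℕ) - 1, by omega⟩
  else ⟨0, hn⟩

lemma sinks_Rp (hn : 0 < n) (p : Fin n → Fin (n + 1)) (hsum : ∑ i, (p i : ℕ) = n) :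
    #(univ.filter fun a : Fin n => ∀ b, ¬ Rp p a b)
      = #(univ.filter fun i : Fin n => (p i : ℕ) ≠ 0) := by
  refine Finset.card_nbij' (i := idx hn p) (j := topv hn p) ?_ ?_ ?_ ?_
  · intro a ha
    rw [Finset.mem_coe, Finset.mem_filter]
    refine ⟨Finset.mem_univ _, ?_⟩
    have h1 := idx_le hn p a
    have h2 := idx_lt hn p hsum a
    omega
  · intro i hi
    rw [Finset.mem_coe, Finset.mem_filter] at hi
    have hcond : off p i + (p i : ℕ) ≤ n ∧ 0 < (p i : ℕ) :=
      ⟨off_add_le_n p hsum i, by omega⟩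
    rw [Finset.mem_coe, Finset.mem_filter]
    refine ⟨Finset.mem_univ _, ?_⟩
    intro b hRb
    obtain ⟨hlt, i', h1', h2'⟩ := hRb
    rw [topv, dif_pos hcond] at hlt h1'
    have hlt' : off p i + (p i : ℕ) - 1 < (b : ℕ) := hlt
    have h1'' : off p i' ≤ off p i + (p i : ℕ) - 1 := h1'
    have hii' : i' = i :=
      blk_unique p (x := off p i + (p i : ℕ) - 1) ⟨h1'', by omega⟩ ⟨by omega, by omega⟩
    rw [hii'] at h2'
    omega
  · intro a ha
    rw [Finset.mem_coe, Finset.mem_filter] at ha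
    have h1 := idx_le hn p a
    have h2 := idx_lt hn p hsum a
    have hcond : off p (idx hn p a) + (p (idx hn p a) : ℕ) ≤ n ∧ 0 < (p (idx hn p a) : ℕ) :=
      ⟨off_add_le_n p hsum _, by omega⟩
    have htopa : (a : ℕ) + 1 = off p (idx hn p a) + (p (idx hn p a) : ℕ) := by
      by_contra hne
      have hlt2 : (a : ℕ) + 1 < off p (idx hn p a) + (p (idx hn p a) : ℕ) := by omega
      have hbn : (a : ℕ) + 1 < n := by
        have := off_add_le_n p hsum (idx hn p a); omega
      have : Rp p a ⟨(a : ℕ) + 1, hbn⟩ :=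
        ⟨Nat.lt_succ_self _, idx hn p a, h1,
          show (a : ℕ) + 1 < off p (idx hn p a) + (p (idx hn p a) : ℕ) by omega⟩
      exact ha.2 _ this
    rw [topv, dif_pos hcond]
    exact Fin.ext (show off p (idx hn p a) + (p (idx hn p a) : ℕ) - 1 = (a : ℕ) by omega)
  · intro i hi
    rw [Finset.mem_coe, Finset.mem_filter] at hi
    have hcond : off p i + (p i : ℕ) ≤ n ∧ 0 < (p i : ℕ) :=
      ⟨off_add_le_n p hsum i, by omega⟩
    rw [idx_eq_iff hn p hsum, topv, dif_pos hcond]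
    exact ⟨show off p i ≤ off p i + (p i : ℕ) - 1 by omega,
      show off p i + (p i : ℕ) - 1 < off p i + (p i : ℕ) by omega⟩



lemma prod_monomial_one {ι : Type*} (s : Finset ι) (μ : ι → (Fin N →₀ ℕ)) :
    (∏ i ∈ s, MvPolynomial.monomial (μ i) (1 : ℚ)) = MvPolynomial.monomial (∑ i ∈ s, μ i) 1 := by
  induction s using Finset.induction with
  | empty => simp
  | insert _ _ h ih =>
    rw [Finset.prod_insert h, Finset.sum_insert h, ih, MvPolynomial.monomial_mul, one_mul]

noncomputable def blkF (p : Fin n → Fin (n + 1)) (i : Fin n) : Finset (Fin n) :=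
  univ.filter fun a => off p i ≤ (a : ℕ) ∧ (a : ℕ) < off p i + (p i : ℕ)

lemma mem_blkF (hn : 0 < n) (p : Fin n → Fin (n + 1)) (hsum : ∑ i, (p i : ℕ) = n)
    (a i : Fin n) : a ∈ blkF p i ↔ idx hn p a = i := by
  rw [blkF, Finset.mem_filter, idx_eq_iff hn p hsum]
  simp

lemma card_blkF (hn : 0 < n) (p : Fin n → Fin (n + 1)) (hsum : ∑ i, (p i : ℕ) = n)
    (i : Fin n) : #(blkF p i) = (p i : ℕ) := by
  have hle := off_add_le_n p hsum i
  rw [show #(blkF p i) = #(Finset.range (p i : ℕ)) from ?_, Finset.card_range]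
  refine Finset.card_nbij' (i := fun a => (a : ℕ) - off p i)
    (j := fun r => if h : off p i + r < n then (⟨off p i + r, h⟩ : Fin n) else ⟨0, hn⟩)
    ?_ ?_ ?_ ?_
  · intro a ha
    rw [Finset.mem_coe, blkF, Finset.mem_filter] at ha
    show (a : ℕ) - off p i ∈ Finset.range (p i : ℕ)
    rw [Finset.mem_range]
    omega
  · intro r hr
    rw [Finset.mem_coe, Finset.mem_range] at hr
    have h : off p i + r < n := by omega
    show (if h : off p i + r < n then (⟨off p i + r, h⟩ : Fin n) else ⟨0, hn⟩) ∈ blkF p i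
    rw [dif_pos h, blkF, Finset.mem_filter]
    exact ⟨Finset.mem_univ _, show off p i ≤ off p i + r by omega,
      show off p i + r < off p i + (p i : ℕ) by omega⟩
  · intro a ha
    rw [Finset.mem_coe, blkF, Finset.mem_filter] at ha
    have h : off p i + ((a : ℕ) - off p i) < n := by have := a.isLt; omega
    show (if h : off p i + ((a : ℕ) - off p i) < n
      then (⟨off p i + ((a : ℕ) - off p i), h⟩ : Fin n) else ⟨0, hn⟩) = a
    rw [dif_pos h]
    exact Fin.ext (show off p i + ((a : ℕ) - off p i) = (a : ℕ) by omega)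
  · intro r hr
    rw [Finset.mem_coe, Finset.mem_range] at hr
    have h : off p i + r < n := by omega
    show (Fin.val (if h : off p i + r < n then (⟨off p i + r, h⟩ : Fin n) else ⟨0, hn⟩))
      - off p i = r
    rw [dif_pos h]
    show off p i + r - off p i = r
    omega

noncomputable def fg (hn : 0 < n) (hN0 : 0 < N) (p : Fin n → Fin (n + 1))
    (g : Fin n → Finset (Fin N)) (a : Fin n) : Fin N :=
  if h : ((a : ℕ) - off p (idx hn p a) < (p (idx hn p a) : ℕ))
      ∧ #(g (idx hn p a)) = (p (idx hn p a) : ℕ)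
  then (g (idx hn p a)).orderEmbOfFin h.2 ⟨(a : ℕ) - off p (idx hn p a), h.1⟩
  else ⟨0, hN0⟩

lemma fg_apply (hn : 0 < n) (hN0 : 0 < N) (p : Fin n → Fin (n + 1))
    (g : Fin n → Finset (Fin N)) (hg : ∀ i, #(g i) = (p i : ℕ)) (a i : Fin n)
    (hi : idx hn p a = i) (hb : (a : ℕ) - off p i < (p i : ℕ)) :
    fg hn hN0 p g a = (g i).orderEmbOfFin (hg i) ⟨(a : ℕ) - off p i, hb⟩ := by
  subst hi
  rw [fg, dif_pos ⟨hb, hg _⟩]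

lemma sub_off_lt (hn : 0 < n) (p : Fin n → Fin (n + 1)) (hsum : ∑ i, (p i : ℕ) = n)
    (a : Fin n) : (a : ℕ) - off p (idx hn p a) < (p (idx hn p a) : ℕ) := by
  have h1 := idx_le hn p a
  have h2 := idx_lt hn p hsum a
  omega

lemma fg_compat (hn : 0 < n) (hN0 : 0 < N) (p : Fin n → Fin (n + 1))
    (hsum : ∑ i, (p i : ℕ) = n)
    (g : Fin n → Finset (Fin N)) (hg : ∀ i, #(g i) = (p i : ℕ)) :
    Cp (Rp p) (fg hn hN0 p g) := by
  intro a b hab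
  have hab' := hab
  rw [Rp_iff hn p hsum] at hab'
  obtain ⟨heq, hlt⟩ := hab'
  have haoff := idx_le hn p a
  have hboff := idx_le hn p b
  have ha := sub_off_lt hn p hsum a
  have hb := sub_off_lt hn p hsum b
  rw [fg_apply hn hN0 p g hg a (idx hn p a) rfl ha,
    fg_apply hn hN0 p g hg b (idx hn p a) heq.symm (by rw [heq]; exact hb)]
  have hmono := OrderEmbedding.strictMono ((g (idx hn p a)).orderEmbOfFin (hg _))
  have hrank : (⟨(a : ℕ) - off p (idx hn p a), ha⟩ : Fin (p (idx hn p a) : ℕ))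
      < ⟨(b : ℕ) - off p (idx hn p a), by rw [heq]; exact hb⟩ := by
    rw [Fin.lt_def]
    show (a : ℕ) - off p (idx hn p a) < (b : ℕ) - off p (idx hn p a)
    omega
  exact hmono hrank

lemma image_fg (hn : 0 < n) (hN0 : 0 < N) (p : Fin n → Fin (n + 1))
    (hsum : ∑ i, (p i : ℕ) = n)
    (g : Fin n → Finset (Fin N)) (hg : ∀ i, #(g i) = (p i : ℕ)) (i : Fin n) :
    (blkF p i).image (fg hn hN0 p g) = g i := by
  ext v
  simp only [Finset.mem_image]
  constructor
  · rintro ⟨a, ha, rfl⟩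
    have hai : idx hn p a = i := (mem_blkF hn p hsum a i).mp ha
    have hbd : (a : ℕ) - off p i < (p i : ℕ) := by
      rw [← hai]; exact sub_off_lt hn p hsum a
    rw [fg_apply hn hN0 p g hg a i hai hbd]
    exact Finset.orderEmbOfFin_mem _ _ _
  · intro hv
    have hrange : v ∈ Set.range ((g i).orderEmbOfFin (hg i)) := by
      rw [Finset.range_orderEmbOfFin]
      exact hv
    obtain ⟨r, hr⟩ := hrange
    have hbound : off p i + (r : ℕ) < n := by
      have h1 := r.isLt
      have h2 := off_add_le_n p hsum i
      omega
    have hblk : (⟨off p i + (r : ℕ), hbound⟩ : Fin n) ∈ blkF p i := by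
      rw [blkF, Finset.mem_filter]
      exact ⟨Finset.mem_univ _, show off p i ≤ off p i + (r : ℕ) by omega,
        show off p i + (r : ℕ) < off p i + (p i : ℕ) from by have := r.isLt; omega⟩
    refine ⟨_, hblk, ?_⟩
    have hai : idx hn p (⟨off p i + (r : ℕ), hbound⟩ : Fin n) = i :=
      (mem_blkF hn p hsum _ i).mp hblk
    have hbd : ((⟨off p i + (r : ℕ), hbound⟩ : Fin n) : ℕ) - off p i < (p i : ℕ) := by
      show off p i + (r : ℕ) - off p i < (p i : ℕ)
      have := r.isLt; omega
    rw [fg_apply hn hN0 p g hg _ i hai hbd]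
    refine Eq.trans (congrArg ((g i).orderEmbOfFin (hg i)) (Fin.ext ?_)) hr
    show off p i + (r : ℕ) - off p i = (r : ℕ)
    omega

lemma inj_blk (p : Fin n → Fin (n + 1)) {f : Fin n → Fin N} (hf : Cp (Rp p) f)
    (i : Fin n) : Set.InjOn f ↑(blkF p i) := by
  intro x hx y hy hxy
  rw [Finset.mem_coe, blkF, Finset.mem_filter] at hx hy
  rcases lt_trichotomy (x : ℕ) (y : ℕ) with h | h | h
  · exact absurd (congrArg Fin.val hxy)
      (Nat.ne_of_lt (hf x y ⟨h, i, hx.2.1, hy.2.2⟩))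
  · exact Fin.ext h
  · exact absurd (congrArg Fin.val hxy).symm
      (Nat.ne_of_lt (hf y x ⟨h, i, hy.2.1, hx.2.2⟩))

lemma cont_fg (hn : 0 < n) (hN0 : 0 < N) (p : Fin n → Fin (n + 1))
    (hsum : ∑ i, (p i : ℕ) = n)
    (g : Fin n → Finset (Fin N)) (hg : ∀ i, #(g i) = (p i : ℕ)) :
    cont (fg hn hN0 p g) = ∑ i, ∑ v ∈ g i, Finsupp.single v (1 : ℕ) := by
  rw [cont, ← Finset.sum_fiberwise_of_maps_to
    (g := idx hn p) (t := (univ : Finset (Fin n))) (fun _ _ => Finset.mem_univ _)]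
  refine Finset.sum_congr rfl fun i _ => ?_
  have hfib : (univ : Finset (Fin n)).filter (fun a => idx hn p a = i) = blkF p i := by
    ext a
    rw [Finset.mem_filter, mem_blkF hn p hsum]
    simp
  rw [hfib, ← image_fg hn hN0 p hsum g hg i, Finset.sum_image]
  intro x hx y hy hxy
  exact inj_blk p (fg_compat hn hN0 p hsum g hg) i (Finset.mem_coe.mpr hx)
    (Finset.mem_coe.mpr hy) hxy

lemma fg_gI (hn : 0 < n) (hN0 : 0 < N) (p : Fin n → Fin (n + 1))
    (hsum : ∑ i, (p i : ℕ) = n) (f : Fin n → Fin N) (hf : Cp (Rp p) f) :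
    fg hn hN0 p (fun i => (blkF p i).image f) = f := by
  have hcard : ∀ i, #((blkF p i).image f) = (p i : ℕ) := fun i => by
    rw [Finset.card_image_of_injOn (inj_blk p hf i), card_blkF hn p hsum]
  funext a
  set i := idx hn p a with hidef
  have hoffle : off p i ≤ (a : ℕ) := by rw [hidef]; exact idx_le hn p a
  have hlt : (a : ℕ) < off p i + (p i : ℕ) := by rw [hidef]; exact idx_lt hn p hsum a
  set F : Fin (p i : ℕ) → Fin N := fun r =>
    f ⟨off p i + (r : ℕ), by
      have h1 := r.isLt
      have h2 := off_add_le_n p hsum i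
      omega⟩ with hFdef
  have hFmem : ∀ r, F r ∈ (blkF p i).image f := by
    intro r
    rw [Finset.mem_image]
    refine ⟨_, ?_, rfl⟩
    rw [blkF, Finset.mem_filter]
    exact ⟨Finset.mem_univ _, show off p i ≤ off p i + (r : ℕ) by omega,
      show off p i + (r : ℕ) < off p i + (p i : ℕ) from by have := r.isLt; omega⟩
  have hFsm : StrictMono F := by
    intro r r' hrr
    rw [Fin.lt_def] at hrr
    apply hf
    refine ⟨?_, i, ?_, ?_⟩
    · show off p i + (r : ℕ) < off p i + (r' : ℕ); omega
    · show off p i ≤ off p i + (r : ℕ); omega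
    · show off p i + (r' : ℕ) < off p i + (p i : ℕ); have := r'.isLt; omega
  have hF := Finset.orderEmbOfFin_unique (hcard i) hFmem hFsm
  rw [fg_apply hn hN0 p (fun i => (blkF p i).image f) hcard a i rfl
    (sub_off_lt hn p hsum a)]
  rw [← congrFun hF ⟨(a : ℕ) - off p i, by rw [hidef]; exact sub_off_lt hn p hsum a⟩]
  rw [hFdef]
  exact congrArg f (Fin.ext (show off p i + ((a : ℕ) - off p i) = (a : ℕ) by omega))

lemma eProd_eq_Xbar (hn : 0 < n) (hN0 : 0 < N) (p : Fin n → Fin (n + 1))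
    (hsum : ∑ i, (p i : ℕ) = n) :
    eProd N p = Xbar (Rp p) N := by
  rw [eProd, Xbar]
  rw [Finset.prod_congr rfl fun i (_ : i ∈ (univ : Finset (Fin n))) =>
    MvPolynomial.esymm_eq_sum_monomial (Fin N) ℚ (p i : ℕ)]
  rw [Finset.prod_univ_sum]
  refine Finset.sum_nbij' (i := fg hn hN0 p) (j := fun f i => (blkF p i).image f)
    ?_ ?_ ?_ ?_ ?_
  · intro g hg
    rw [Fintype.mem_piFinset] at hg
    have hg' : ∀ i, #(g i) = (p i : ℕ) := fun i =>
      Finset.mem_powersetCard_univ.mp (hg i)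
    rw [Finset.mem_filter]
    exact ⟨Finset.mem_univ _, fg_compat hn hN0 p hsum g hg'⟩
  · intro f hf
    rw [Finset.mem_filter] at hf
    rw [Fintype.mem_piFinset]
    intro i
    rw [Finset.mem_powersetCard_univ, Finset.card_image_of_injOn (inj_blk p hf.2 i),
      card_blkF hn p hsum]
  · intro g hg
    rw [Fintype.mem_piFinset] at hg
    have hg' : ∀ i, #(g i) = (p i : ℕ) := fun i =>
      Finset.mem_powersetCard_univ.mp (hg i)
    funext i
    exact image_fg hn hN0 p hsum g hg' i
  · intro f hf
    rw [Finset.mem_filter] at hf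
    exact fg_gI hn hN0 p hsum f hf.2
  · intro g hg
    rw [Fintype.mem_piFinset] at hg
    have hg' : ∀ i, #(g i) = (p i : ℕ) := fun i =>
      Finset.mem_powersetCard_univ.mp (hg i)
    rw [prod_monomial_one, cont_fg hn hN0 p hsum g hg']



lemma sum_w_eq (jj : ℕ) (R : Fin n → Fin n → Prop) :
    ∑ f ∈ (univ : Finset (Fin n → Fin N)).filter (Cp R), w n jj (cont f)
      = L n jj (Xbar (n := n) R N) := by
  rw [Xbar, ← Lhom_apply, map_sum]
  exact (Finset.sum_congr rfl fun f _ => by rw [Lhom_apply, L_monomial]).symm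

/-- The orientation induced by a coloring. -/
noncomputable def orC (lt : Fin n → Fin n → Prop) (c : Fin n → Fin N) :
    Fin n → Fin n → Bool :=
  fun a b => if Incomp lt a b ∧ (c a : ℕ) < (c b : ℕ) then true else false

lemma orC_true_iff (lt : Fin n → Fin n → Prop) (c : Fin n → Fin N) (a b : Fin n) :
    orC lt c a b = true ↔ (Incomp lt a b ∧ (c a : ℕ) < (c b : ℕ)) := by
  rw [orC]
  by_cases h : Incomp lt a b ∧ (c a : ℕ) < (c b : ℕ) <;> simp [h]

lemma incomp_symm {lt : Fin n → Fin n → Prop} {a b : Fin n} (h : Incomp lt a b) :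
    Incomp lt b a := ⟨h.1.symm, h.2.2, h.2.1⟩

lemma proper_ne_val {c : Fin n → Fin N} {a b : Fin n} (h : c a ≠ c b) :
    (c a : ℕ) ≠ (c b : ℕ) := fun h' => h (Fin.ext h')

lemma orC_mem_AO (lt : Fin n → Fin n → Prop) (c : Fin n → Fin N)
    (hprop : ∀ a b : Fin n, Incomp lt a b → c a ≠ c b) :
    IsOrientation lt (orC lt c) ∧
      (∀ a, ¬ Relation.TransGen (fun x y => orC lt c x y = true) a a) := by
  constructor
  · constructor
    · intro a b h
      exact ((orC_true_iff lt c a b).mp h).1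
    · intro a b hinc
      have hne := proper_ne_val (hprop a b hinc)
      constructor
      · intro h
        have := ((orC_true_iff lt c a b).mp h).2
        rw [← Bool.not_eq_true, orC_true_iff]
        intro hcon
        omega
      · intro h
        rw [← Bool.not_eq_true, orC_true_iff] at h
        rw [orC_true_iff]
        refine ⟨hinc, ?_⟩
        by_contra hcon
        exact h ⟨incomp_symm hinc, by omega⟩
  · intro a hcyc
    have hmono : ∀ x y, Relation.TransGen (fun x y => orC lt c x y = true) x y →
        (c x : ℕ) < (c y : ℕ) := by
      intro x y h
      induction h with
      | single h' => exact ((orC_true_iff lt c _ _).mp h').2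
      | tail _ h' ih => exact lt_trans ih ((orC_true_iff lt c _ _).mp h').2
    exact absurd (hmono a a hcyc) (lt_irrefl _)

lemma fiber_orC (lt : Fin n → Fin n → Prop) (o : Fin n → Fin n → Bool)
    (ho : IsOrientation lt o) :
    ((univ : Finset (Fin n → Fin N)).filter
        (fun c => ∀ a b : Fin n, Incomp lt a b → c a ≠ c b)).filter
      (fun c => orC lt c = o)
    = (univ : Finset (Fin n → Fin N)).filter (Cp (fun x y => o x y = true)) := by
  ext c
  simp only [Finset.mem_filter, Finset.mem_univ, true_and]
  constructor
  · rintro ⟨hprop, horc⟩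
    intro a b hoab
    rw [← horc, orC_true_iff] at hoab
    exact hoab.2
  · intro hcp
    have hprop : ∀ a b : Fin n, Incomp lt a b → c a ≠ c b := by
      intro a b hinc
      have hiff := ho.2 a b hinc
      rcases Bool.eq_false_or_eq_true (o a b) with h | h
      · have := hcp a b h
        intro hcon
        rw [hcon] at this
        omega
      · have hba : o b a = true := by
          rcases Bool.eq_false_or_eq_true (o b a) with h' | h'
          · exact h'
          · exact absurd (hiff.mpr h') (by simp [h])
        have := hcp b a hba
        intro hcon
        rw [hcon] at this
        omega
    refine ⟨hprop, ?_⟩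
    funext a b
    rcases Bool.eq_false_or_eq_true (o a b) with h | h
    · rw [h]
      exact (orC_true_iff lt c a b).mpr ⟨ho.1 a b h, hcp a b h⟩
    · rw [h]
      refine Bool.eq_false_iff.mpr ?_
      intro htrue
      obtain ⟨hinc, hlt⟩ := (orC_true_iff lt c a b).mp htrue
      have hba : o b a = true := by
        rcases Bool.eq_false_or_eq_true (o b a) with h' | h'
        · exact h'
        · exact absurd ((ho.2 a b hinc).mpr h') (by simp [h])
      have := hcp b a hba
      omega

lemma ascC_eq_ascOrient (lt : Fin n → Fin n → Prop) (c : Fin n → Fin N) :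
    ascC lt c = ascOrient (orC lt c) := by
  rw [ascC, ascOrient]
  congr 1
  apply Finset.filter_congr
  intro q _
  constructor
  · rintro ⟨h1, h2, h3⟩
    exact ⟨h1, (orC_true_iff lt c q.1 q.2).mpr ⟨h2, h3⟩⟩
  · rintro ⟨h1, h2⟩
    obtain ⟨h2', h3⟩ := (orC_true_iff lt c q.1 q.2).mp h2
    exact ⟨h1, h2', h3⟩

/-- (A): L of a coefficient of the chromatic quasisymmetric polynomial,
expressed as a sum over acyclic orientations with `j` sinks. -/
lemma chrom_coeff_L (hn : 0 < n) (hNn : n ≤ N) (lt : Fin n → Fin n → Prop)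
    (j d : ℕ) (hj : 1 ≤ j) :
    L n j ((chromIncQSymQ N n lt).coeff d)
      = ∑ o ∈ acyclicOrientations lt j, (if d = ascOrient o then (1 : ℚ) else 0) := by
  have hcoeff : (chromIncQSymQ N n lt).coeff d
      = ∑ c ∈ (univ : Finset (Fin n → Fin N)).filter
          (fun c => ∀ a b : Fin n, Incomp lt a b → c a ≠ c b),
        (if d = ascC lt c then MvPolynomial.monomial (cont c) (1 : ℚ) else 0) := by
    rw [chromIncQSymQ, Polynomial.finset_sum_coeff]
    refine Finset.sum_congr rfl fun c _ => ?_
    rw [Polynomial.coeff_mul_C, Polynomial.coeff_X_pow, prod_X_eq_monomial]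
    by_cases h : d = ascC lt c <;> simp [h]
  rw [hcoeff, ← Lhom_apply, map_sum]
  have hterm : ∀ c ∈ (univ : Finset (Fin n → Fin N)).filter
      (fun c => ∀ a b : Fin n, Incomp lt a b → c a ≠ c b),
      Lhom n j N (if d = ascC lt c then MvPolynomial.monomial (cont c) (1 : ℚ) else 0)
      = (if d = ascC lt c then w n j (cont c) else 0) := by
    intro c _
    by_cases h : d = ascC lt c <;> simp [h, Lhom_apply, L_monomial, L_zero]
  rw [Finset.sum_congr rfl hterm]
  -- group by the induced orientation
  set AO := (univ : Finset (Fin n → Fin n → Bool)).filter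
    (fun o => IsOrientation lt o ∧
      ∀ a, ¬ Relation.TransGen (fun x y => o x y = true) a a) with hAO
  have hmaps : ∀ c ∈ (univ : Finset (Fin n → Fin N)).filter
      (fun c => ∀ a b : Fin n, Incomp lt a b → c a ≠ c b), orC lt c ∈ AO := by
    intro c hc
    rw [Finset.mem_filter] at hc
    rw [hAO, Finset.mem_filter]
    exact ⟨Finset.mem_univ _, orC_mem_AO lt c hc.2⟩
  rw [← Finset.sum_fiberwise_of_maps_to hmaps]
  have hper : ∀ o ∈ AO,
      (∑ c ∈ ((univ : Finset (Fin n → Fin N)).filter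
          (fun c => ∀ a b : Fin n, Incomp lt a b → c a ≠ c b)).filter
          (fun c => orC lt c = o),
        (if d = ascC lt c then w n j (cont c) else 0))
      = (if d = ascOrient o then (1 : ℚ) else 0) *
          (if #(univ.filter fun a : Fin n => ∀ b, ¬ (o a b = true)) = j then 1 else 0) := by
    intro o hoAO
    rw [hAO, Finset.mem_filter] at hoAO
    obtain ⟨-, hor, hacyc⟩ := hoAO
    have hterm2 : ∀ c ∈ ((univ : Finset (Fin n → Fin N)).filter
        (fun c => ∀ a b : Fin n, Incomp lt a b → c a ≠ c b)).filter
        (fun c => orC lt c = o),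
        (if d = ascC lt c then w n j (cont c) else 0)
        = (if d = ascOrient o then w n j (cont c) else 0) := by
      intro c hc
      rw [Finset.mem_filter] at hc
      rw [ascC_eq_ascOrient, hc.2]
    rw [Finset.sum_congr rfl hterm2]
    by_cases hd : d = ascOrient o
    · have hstep : (∑ c ∈ ((univ : Finset (Fin n → Fin N)).filter
          (fun c => ∀ a b : Fin n, Incomp lt a b → c a ≠ c b)).filter
          (fun c => orC lt c = o),
          (if d = ascOrient o then w n j (cont c) else 0))
          = ∑ c ∈ (univ : Finset (Fin n → Fin N)).filter
              (Cp (fun x y => o x y = true)), w n j (cont c) := by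
        rw [fiber_orC lt o hor]
        exact Finset.sum_congr rfl fun c _ => if_pos hd
      rw [hstep, sum_w_eq, L_Xbar _ hn hNn hacyc j hj, if_pos hd, one_mul]
      congr 2
      exact congrArg Finset.card
        ((Finset.filter_congr_decidable _ _ _).trans
          (Finset.filter_congr_decidable _ _ _).symm)
    · simp [hd]
  rw [Finset.sum_congr rfl hper]
  -- match against the sum over acyclicOrientations
  have hsplit : acyclicOrientations lt j = AO.filter
      (fun o => #(univ.filter fun a : Fin n => ∀ b, o a b = false) = j) := by
    rw [hAO, acyclicOrientations, Finset.filter_filter]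
    refine Finset.filter_congr fun o _ => ?_
    tauto
  rw [hsplit]
  conv_rhs => rw [Finset.sum_filter]
  refine Finset.sum_congr rfl fun o _ => ?_
  have hfcong : (univ.filter fun a : Fin n => ∀ b, o a b = false)
      = (univ.filter fun a : Fin n => ∀ b, ¬ (o a b = true)) := by
    refine Finset.filter_congr fun a _ => ?_
    simp [Bool.not_eq_true]
  rw [hfcong]
  by_cases h1 : #(univ.filter fun a : Fin n => ∀ b, ¬ (o a b = true)) = j <;>
    by_cases h2 : d = ascOrient o <;> simp [h1, h2]

/-- (B): L of a coefficient of the e-expansion side. -/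
lemma eside_coeff_L (hn : 0 < n) (hNn : n ≤ N)
    (cfam : (Fin n → Fin (n + 1)) → Polynomial ℚ) (j d : ℕ) (hj : 1 ≤ j) :
    L n j ((∑ p ∈ partitionsOf n,
        (cfam p).map (MvPolynomial.C : ℚ →+* MvPolynomial (Fin N) ℚ) *
          Polynomial.C (eProd N p)).coeff d)
      = ∑ p ∈ (partitionsOf n).filter
          (fun p => (Finset.univ.filter fun i => (p i : ℕ) ≠ 0).card = j),
          (cfam p).coeff d := by
  have hN0 : 0 < N := lt_of_lt_of_le hn hNn
  have hcoeff : (∑ p ∈ partitionsOf n,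
      (cfam p).map (MvPolynomial.C : ℚ →+* MvPolynomial (Fin N) ℚ) *
        Polynomial.C (eProd N p)).coeff d
      = ∑ p ∈ partitionsOf n, MvPolynomial.C ((cfam p).coeff d) * eProd N p := by
    rw [Polynomial.finset_sum_coeff]
    refine Finset.sum_congr rfl fun p _ => ?_
    rw [Polynomial.coeff_mul_C, Polynomial.coeff_map]
  rw [hcoeff, ← Lhom_apply, map_sum]
  have hterm : ∀ p ∈ partitionsOf n,
      Lhom n j N (MvPolynomial.C ((cfam p).coeff d) * eProd N p)
      = (cfam p).coeff d *
          (if (Finset.univ.filter fun i : Fin n => (p i : ℕ) ≠ 0).card = j then 1 else 0) := by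
    intro p hp
    rw [partitionsOf, Finset.mem_filter] at hp
    obtain ⟨-, -, hsum⟩ := hp
    rw [Lhom_apply, L_C_mul, eProd_eq_Xbar hn hN0 p hsum,
      L_Xbar _ hn hNn (Rp_acyclic' p) j hj, sinks_Rp hn p hsum]
  rw [Finset.sum_congr rfl hterm, Finset.sum_filter]
  refine Finset.sum_congr rfl fun p _ => ?_
  by_cases h : (Finset.univ.filter fun i : Fin n => (p i : ℕ) ≠ 0).card = j <;> simp [h]


end SinkAux

/-- for a natural unit interval order `P` on `[n]` with `G = inc(P)`
and `N ≥ n`, if `X_G(x;t) = ∑_{λ⊢n} c_λ(t) e_λ` then for every `j ≥ 1`,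
`∑_{λ⊢n, ℓ(λ)=j} c_λ(t) = ∑_{o ∈ O(G,j)} t^{asc(o)}`. -/
theorem chromatic_qsym_e_sink_formula (n N : ℕ) (hN : n ≤ N) (P : NUIO n)
    (cfam : (Fin n → Fin (n + 1)) → Polynomial ℚ)
    (hc : chromIncQSymQ N n P.lt =
      ∑ p ∈ partitionsOf n,
        (cfam p).map (MvPolynomial.C : ℚ →+* MvPolynomial (Fin N) ℚ) *
          Polynomial.C (eProd N p)) :
    ∀ j, 1 ≤ j →
      (∑ p ∈ (partitionsOf n).filter
          (fun p => (Finset.univ.filter fun i => (p i : ℕ) ≠ 0).card = j), cfam p) =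
      ∑ o ∈ acyclicOrientations P.lt j, (Polynomial.X : Polynomial ℚ) ^ ascOrient o := by
  intro j hj
  rcases Nat.eq_zero_or_pos n with hn0 | hn
  · subst hn0
    have h1 : (partitionsOf 0).filter
        (fun p => (Finset.univ.filter fun i => (p i : ℕ) ≠ 0).card = j) = ∅ := by
      rw [Finset.filter_eq_empty_iff]
      intro p _
      have h0 : (Finset.univ.filter fun i : Fin 0 => (p i : ℕ) ≠ 0).card = 0 := by simp
      omega
    have h2 : acyclicOrientations P.lt j = ∅ := by
      rw [acyclicOrientations, Finset.filter_eq_empty_iff]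
      intro o _
      rintro ⟨-, -, hcard⟩
      have h0 : (Finset.univ.filter fun a : Fin 0 => ∀ b, o a b = false).card = 0 := by
        simp
      omega
    rw [h1, h2, Finset.sum_empty, Finset.sum_empty]
  · apply Polynomial.ext
    intro d
    have hkey := congrArg (fun q : Polynomial (MvPolynomial (Fin N) ℚ) =>
      SinkAux.L n j (q.coeff d)) hc
    rw [SinkAux.chrom_coeff_L hn hN P.lt j d hj,
      SinkAux.eside_coeff_L hn hN cfam j d hj] at hkey
    rw [Polynomial.finset_sum_coeff, Polynomial.finset_sum_coeff]
    have hxp : ∀ o ∈ acyclicOrientations P.lt j,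
        ((Polynomial.X : Polynomial ℚ) ^ ascOrient o).coeff d
          = if d = ascOrient o then 1 else 0 :=
      fun o _ => Polynomial.coeff_X_pow _ _
    rw [Finset.sum_congr rfl hxp, ← hkey]
end

section
/- Let P be any poset on [n], let G = inc(P) be its incomparability graph, and fix N ≥ 1. Then X_G(x_1,…,x_N;t) = Σ_{σ∈S_n} t^{inv_G(σ)} F_{n,[n−1]∖Des_P(σ)}(x_1,…,x_N) in ℤ[x_1,…,x_N][t]. (This is equivalent, via the involution ω sending F_{n,S} to F_{n,[n−1]∖S}, to the expansion ωX_G(x,t) = Σ_σ t^{inv_G(σ)} F_{n,Des_P(σ)}.) -/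
open scoped Classical

/-- `[m]_q = 1 + q + ⋯ + q^{m-1}` for an element `q` of a semiring. -/
def qIntE {K : Type*} [Semiring K] (q : K) (m : ℕ) : K := ∑ i ∈ Finset.range m, q ^ i

/-- `[m]_q! = [m]_q [m-1]_q ⋯ [1]_q`. -/
def qFactE {K : Type*} [Semiring K] (q : K) : ℕ → K
  | 0 => 1
  | m + 1 => qFactE q m * qIntE q (m + 1)

/-- The excedance number of a permutation of `{1,…,n}` (0-indexed model on `Fin n`). -/
def exc {n : ℕ} (σ : Equiv.Perm (Fin n)) : ℕ :=
  (Finset.univ.filter fun i : Fin n => (i : ℕ) < (σ i : ℕ)).card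

/-- The major index: the sum of the (1-based) descent positions. -/
def maj {n : ℕ} (σ : Equiv.Perm (Fin n)) : ℕ :=
  ∑ j ∈ Finset.range n,
    if h : j + 1 < n then
      (if (σ ⟨j + 1, h⟩ : ℕ) < (σ ⟨j, Nat.lt_of_succ_lt h⟩ : ℕ) then j + 1 else 0)
    else 0

/-- The descent number. -/
def desNum {n : ℕ} (σ : Equiv.Perm (Fin n)) : ℕ :=
  ∑ j ∈ Finset.range n,
    if h : j + 1 < n then
      (if (σ ⟨j + 1, h⟩ : ℕ) < (σ ⟨j, Nat.lt_of_succ_lt h⟩ : ℕ) then 1 else 0)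
    else 0

/-- `maj_{≥k}`: the sum of the (1-based) positions `i` with `σ(i) - σ(i+1) ≥ k`. -/
def majGe {n : ℕ} (k : ℕ) (σ : Equiv.Perm (Fin n)) : ℕ :=
  ∑ j ∈ Finset.range n,
    if h : j + 1 < n then
      (if (σ ⟨j + 1, h⟩ : ℕ) + k ≤ (σ ⟨j, Nat.lt_of_succ_lt h⟩ : ℕ) then j + 1 else 0)
    else 0

/-- `inv_{<k}`: the number of pairs `i < j` with `0 < σ(i) - σ(j) < k`. -/
def invLt {n : ℕ} (k : ℕ) (σ : Equiv.Perm (Fin n)) : ℕ :=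
  (Finset.univ.filter fun p : Fin n × Fin n =>
    p.1 < p.2 ∧ (σ p.2 : ℕ) < (σ p.1 : ℕ) ∧ (σ p.1 : ℕ) < (σ p.2 : ℕ) + k).card

/-- The Rawlings major index `rmaj_k = inv_{<k} + maj_{≥k}`. -/
def rmaj {n : ℕ} (k : ℕ) (σ : Equiv.Perm (Fin n)) : ℕ := invLt k σ + majGe k σ

/-- The fundamental quasisymmetric polynomial `F_{n,S}(x_1,…,x_N)` (0-indexed model:
`j ∈ S` encodes a required strict decrease between positions `j` and `j+1`,
i.e. the 1-based position `j+1 ∈ S` of the paper). -/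
noncomputable def Fqs (N n : ℕ) (S : Finset ℕ) : MvPolynomial (Fin N) ℤ :=
  ∑ f ∈ Finset.univ.filter (fun f : Fin n → Fin N =>
      (∀ i j : Fin n, i ≤ j → f j ≤ f i) ∧
      ∀ j ∈ S, ∀ h : j + 1 < n, f ⟨j + 1, h⟩ < f ⟨j, Nat.lt_of_succ_lt h⟩),
    ∏ i, MvPolynomial.X (f i)

/-- The set `Dex(σ)` (0-indexed model: `j` encodes the 1-based position `j+1`):
`j ∈ Dex(σ)` iff either (`σ(j) ≤ j` and `σ(j+1) > j+1`), or
(`σ(j) > j ↔ σ(j+1) > j+1` and `σ(j) > σ(j+1)`), all in the 0-indexed sense. -/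
noncomputable def dexSet {n : ℕ} (σ : Equiv.Perm (Fin n)) : Finset ℕ :=
  (Finset.range n).filter fun j => ∃ h : j + 1 < n,
    ((σ ⟨j, Nat.lt_of_succ_lt h⟩ : ℕ) ≤ j ∧ j + 1 < (σ ⟨j + 1, h⟩ : ℕ)) ∨
    (((j < (σ ⟨j, Nat.lt_of_succ_lt h⟩ : ℕ)) ↔ (j + 1 < (σ ⟨j + 1, h⟩ : ℕ))) ∧
      (σ ⟨j + 1, h⟩ : ℕ) < (σ ⟨j, Nat.lt_of_succ_lt h⟩ : ℕ))

/-- `Des_P(σ)` (0-indexed model: `j` encodes the 1-based position `j+1`):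
positions `j` with `σ(j) >_P σ(j+1)`. -/
noncomputable def desPSet {n : ℕ} (lt : Fin n → Fin n → Prop)
    (σ : Equiv.Perm (Fin n)) : Finset ℕ :=
  (Finset.range n).filter fun j =>
    ∃ h : j + 1 < n, lt (σ ⟨j + 1, h⟩) (σ ⟨j, Nat.lt_of_succ_lt h⟩)

section AuxCQS

open Finset

variable {n N : ℕ} {lt : Fin n → Fin n → Prop}

/-- Admissibility of a pair `(σ, f)`: the predicate appearing in `Fqs` with
`S = range (n-1) \ desPSet lt σ`. -/
def AdmX (lt : Fin n → Fin n → Prop) (σ : Equiv.Perm (Fin n)) (f : Fin n → Fin N) : Prop :=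
  (∀ i j : Fin n, i ≤ j → f j ≤ f i) ∧
    ∀ j ∈ Finset.range (n - 1) \ desPSet lt σ, ∀ h : j + 1 < n,
      f ⟨j + 1, h⟩ < f ⟨j, Nat.lt_of_succ_lt h⟩

lemma admx_step {σ : Equiv.Perm (Fin n)} {f : Fin n → Fin N} (hf : AdmX lt σ f)
    (i j : Fin n) (hij : (j : ℕ) = (i : ℕ) + 1) (heq : f i = f j) : lt (σ j) (σ i) := by
  by_cases hd : (i : ℕ) ∈ desPSet lt σ
  · obtain ⟨h', hlt⟩ := (Finset.mem_filter.mp hd).2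
    have e1 : (⟨(i : ℕ) + 1, h'⟩ : Fin n) = j := by
      apply Fin.ext; simp only [Fin.val_mk]; omega
    have e2 : (⟨(i : ℕ), Nat.lt_of_succ_lt h'⟩ : Fin n) = i := Fin.ext rfl
    rwa [e1, e2] at hlt
  · have hj : (j : ℕ) < n := j.isLt
    have h1 : (i : ℕ) + 1 < n := by omega
    have hmem : (i : ℕ) ∈ Finset.range (n - 1) \ desPSet lt σ := by
      refine Finset.mem_sdiff.mpr ⟨Finset.mem_range.mpr (by omega), hd⟩
    have := hf.2 _ hmem h1
    rw [show (⟨(i : ℕ) + 1, h1⟩ : Fin n) = j by apply Fin.ext; simp only [Fin.val_mk]; omega,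
        show (⟨(i : ℕ), Nat.lt_of_succ_lt h1⟩ : Fin n) = i from Fin.ext rfl] at this
    exact absurd heq (ne_of_gt this)

lemma admx_eq_lt (htrans : ∀ a b c, lt a b → lt b c → lt a c)
    {σ : Equiv.Perm (Fin n)} {f : Fin n → Fin N} (hf : AdmX lt σ f) :
    ∀ (d : ℕ) (i j : Fin n), (j : ℕ) = (i : ℕ) + d + 1 → f i = f j → lt (σ j) (σ i) := by
  intro d
  induction d with
  | zero => exact fun i j hij heq => admx_step hf i j (by omega) heq
  | succ d ih =>
    intro i j hij heq
    have hk : (i : ℕ) + 1 < n := by have := j.isLt; omega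
    set k : Fin n := ⟨(i : ℕ) + 1, hk⟩ with hkdef
    have hik : i ≤ k := by rw [Fin.le_def]; show (i : ℕ) ≤ (i : ℕ) + 1; omega
    have hkj : k ≤ j := by rw [Fin.le_def]; show (i : ℕ) + 1 ≤ (j : ℕ); omega
    have h1 : f k ≤ f i := hf.1 i k hik
    have h2 : f j ≤ f k := hf.1 k j hkj
    have hfik : f i = f k := le_antisymm (heq ▸ h2) h1
    have hfkj : f k = f j := hfik.symm.trans heq
    exact htrans _ _ _ (ih k j (by simp [hkdef]; omega) hfkj) (admx_step hf i k rfl hfik)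

lemma admx_lt_of_eq (htrans : ∀ a b c, lt a b → lt b c → lt a c)
    {σ : Equiv.Perm (Fin n)} {f : Fin n → Fin N} (hf : AdmX lt σ f)
    {i j : Fin n} (hij : i < j) (heq : f i = f j) : lt (σ j) (σ i) := by
  exact admx_eq_lt htrans hf ((j : ℕ) - (i : ℕ) - 1) i j (by have := Fin.lt_def.mp hij; omega) heq

lemma admx_proper (htrans : ∀ a b c, lt a b → lt b c → lt a c)
    {σ : Equiv.Perm (Fin n)} {f : Fin n → Fin N} (hf : AdmX lt σ f) :
    ∀ a b, Incomp lt a b → f (σ.symm a) ≠ f (σ.symm b) := by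
  rintro a b ⟨hne, hab, hba⟩ heq
  rcases lt_trichotomy (σ.symm a) (σ.symm b) with h | h | h
  · exact hba (by simpa using admx_lt_of_eq htrans hf h heq)
  · exact hne (by simpa using congrArg σ h)
  · exact hab (by simpa using admx_lt_of_eq htrans hf h heq.symm)

lemma incomp_symm {a b : Fin n} (h : Incomp lt a b) : Incomp lt b a :=
  ⟨h.1.symm, h.2.2, h.2.1⟩

lemma admx_asc (htrans : ∀ a b c, lt a b → lt b c → lt a c)
    {σ : Equiv.Perm (Fin n)} {f : Fin n → Fin N} (hf : AdmX lt σ f) :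
    ascC lt (fun v => f (σ.symm v)) = invInc lt σ := by
  unfold ascC invInc
  apply Finset.card_nbij' (i := fun p => (σ.symm p.2, σ.symm p.1))
    (j := fun q => (σ q.2, σ q.1))
  · intro p hp
    obtain ⟨-, h1, h2, h3⟩ := Finset.mem_filter.mp hp
    refine Finset.mem_filter.mpr ⟨Finset.mem_univ _, ?_, ?_, ?_⟩
    · by_contra hle
      have : σ.symm p.1 ≤ σ.symm p.2 := not_lt.mp hle
      have := hf.1 _ _ this
      exact absurd h3 (not_lt.mpr (Fin.le_def.mp this))
    · simpa using Fin.lt_def.mp h1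
    · simpa using incomp_symm h2
  · intro q hq
    obtain ⟨-, h1, h2, h3⟩ := Finset.mem_filter.mp hq
    refine Finset.mem_filter.mpr ⟨Finset.mem_univ _, Fin.lt_def.mpr h2, incomp_symm h3, ?_⟩
    simp only [Equiv.symm_apply_apply]
    have hle : f q.2 ≤ f q.1 := hf.1 _ _ h1.le
    rcases lt_or_eq_of_le hle with hlt | heq
    · exact Fin.lt_def.mp hlt
    · exact absurd (admx_lt_of_eq htrans hf h1 heq.symm) h3.2.2
  · intro p hp; simp
  · intro q hq; simp

/-- Precedence relation on vertices determined by a coloring: decreasing colors,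
ties broken by `lt`-decreasing. -/
def PrecX (lt : Fin n → Fin n → Prop) (c : Fin n → Fin N) (a b : Fin n) : Prop :=
  c b < c a ∨ (c b = c a ∧ lt b a)

/-- Sorting key. -/
noncomputable def keyF (lt : Fin n → Fin n → Prop) (c : Fin n → Fin N) (a : Fin n) : ℕ :=
  (N - 1 - (c a : ℕ)) * n + (Finset.univ.filter fun b => c b = c a ∧ lt a b).card

lemma rankF_lt (hirrefl : ∀ a, ¬ lt a a) (c : Fin n → Fin N) (a : Fin n) :
    (Finset.univ.filter fun b => c b = c a ∧ lt a b).card < n := by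
  have hsub : (Finset.univ.filter fun b => c b = c a ∧ lt a b) ⊆ Finset.univ.erase a := by
    intro b hb
    obtain ⟨-, -, hb2⟩ := Finset.mem_filter.mp hb
    exact Finset.mem_erase.mpr ⟨fun h => hirrefl a (h ▸ hb2), Finset.mem_univ _⟩
  calc (Finset.univ.filter fun b => c b = c a ∧ lt a b).card
      ≤ (Finset.univ.erase a).card := Finset.card_le_card hsub
    _ < Finset.univ.card := Finset.card_erase_lt_of_mem (Finset.mem_univ a)
    _ = n := by simp

lemma key_lt_of_prec (htrans : ∀ a b c, lt a b → lt b c → lt a c)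
    (hirrefl : ∀ a, ¬ lt a a) {c : Fin n → Fin N} {a b : Fin n}
    (h : PrecX lt c a b) : keyF lt c a < keyF lt c b := by
  rcases h with h | ⟨heq, hlt⟩
  · have hA : N - 1 - (c a : ℕ) < N - 1 - (c b : ℕ) := by
      have := (c a).isLt; have := Fin.lt_def.mp h; omega
    have hra := rankF_lt hirrefl c a
    calc keyF lt c a < (N - 1 - (c a : ℕ)) * n + n := by unfold keyF; omega
      _ = ((N - 1 - (c a : ℕ)) + 1) * n := by ring
      _ ≤ (N - 1 - (c b : ℕ)) * n := Nat.mul_le_mul_right n hA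
      _ ≤ keyF lt c b := Nat.le_add_right _ _
  · have hcard : (Finset.univ.filter fun x => c x = c a ∧ lt a x).card <
        (Finset.univ.filter fun x => c x = c b ∧ lt b x).card := by
      apply Finset.card_lt_card
      constructor
      · intro x hx
        obtain ⟨-, h1, h2⟩ := Finset.mem_filter.mp hx
        exact Finset.mem_filter.mpr ⟨Finset.mem_univ _, heq ▸ h1, htrans _ _ _ hlt h2⟩
      · intro hsub
        have ha : a ∈ Finset.univ.filter fun x => c x = c b ∧ lt b x :=
          Finset.mem_filter.mpr ⟨Finset.mem_univ _, heq.symm, hlt⟩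
        obtain ⟨-, -, h2⟩ := Finset.mem_filter.mp (hsub ha)
        exact hirrefl a h2
    unfold keyF
    simp only [heq] at hcard ⊢
    omega

lemma prec_asymm (htrans : ∀ a b c, lt a b → lt b c → lt a c)
    (hirrefl : ∀ a, ¬ lt a a) {c : Fin n → Fin N} {a b : Fin n}
    (h1 : PrecX lt c a b) (h2 : PrecX lt c b a) : False := by
  rcases h1 with h1 | ⟨e1, l1⟩ <;> rcases h2 with h2 | ⟨e2, l2⟩
  · exact absurd h2 (lt_asymm h1)
  · rw [e2] at h1; exact lt_irrefl _ h1
  · rw [e1] at h2; exact lt_irrefl _ h2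
  · exact hirrefl a (htrans a b a l2 l1)

lemma prec_total {c : Fin n → Fin N}
    (hproper : ∀ a b, Incomp lt a b → c a ≠ c b) {a b : Fin n} (hab : a ≠ b) :
    PrecX lt c a b ∨ PrecX lt c b a := by
  rcases lt_trichotomy (c a) (c b) with h | h | h
  · exact Or.inr (Or.inl h)
  · have hcmp : lt a b ∨ lt b a := by
      by_contra hno
      push_neg at hno
      exact hproper a b ⟨hab, hno.1, hno.2⟩ h
    rcases hcmp with hl | hl
    · exact Or.inr (Or.inr ⟨h, hl⟩)
    · exact Or.inl (Or.inr ⟨h.symm, hl⟩)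
  · exact Or.inl (Or.inl h)

lemma key_inj (htrans : ∀ a b c, lt a b → lt b c → lt a c)
    (hirrefl : ∀ a, ¬ lt a a) {c : Fin n → Fin N}
    (hproper : ∀ a b, Incomp lt a b → c a ≠ c b) :
    Function.Injective (keyF lt c) := by
  intro a b h
  by_contra hne
  rcases prec_total hproper hne with hp | hp
  · exact absurd h (ne_of_lt (key_lt_of_prec htrans hirrefl hp))
  · exact absurd h.symm (ne_of_lt (key_lt_of_prec htrans hirrefl hp))

lemma prec_of_key_lt (htrans : ∀ a b c, lt a b → lt b c → lt a c)
    (hirrefl : ∀ a, ¬ lt a a) {c : Fin n → Fin N}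
    (hproper : ∀ a b, Incomp lt a b → c a ≠ c b) {a b : Fin n}
    (hab : a ≠ b) (h : keyF lt c a < keyF lt c b) : PrecX lt c a b := by
  rcases prec_total hproper hab with hp | hp
  · exact hp
  · exact absurd (key_lt_of_prec htrans hirrefl hp) (by omega)

lemma eq_sort_of_strictMono {c : Fin n → Fin N} {σ : Equiv.Perm (Fin n)}
    (hsm : StrictMono (keyF lt c ∘ σ)) : σ = Tuple.sort (keyF lt c) :=
  Tuple.eq_sort_iff.mpr ⟨hsm.monotone, fun i j hij heq => absurd heq (ne_of_lt (hsm hij))⟩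

lemma admx_strictMono (htrans : ∀ a b c, lt a b → lt b c → lt a c)
    (hirrefl : ∀ a, ¬ lt a a) {σ : Equiv.Perm (Fin n)} {f : Fin n → Fin N}
    (hf : AdmX lt σ f) : StrictMono (keyF lt (fun v => f (σ.symm v)) ∘ σ) := by
  intro i j hij
  apply key_lt_of_prec htrans hirrefl
  have h1 : f j ≤ f i := hf.1 i j hij.le
  rcases lt_or_eq_of_le h1 with hlt | heq
  · exact Or.inl (by simpa using hlt)
  · exact Or.inr ⟨by simpa using heq, by simpa using admx_lt_of_eq htrans hf hij heq.symm⟩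

lemma adm_of_prec {c : Fin n → Fin N} {σ : Equiv.Perm (Fin n)}
    (hpr : ∀ i j : Fin n, i < j → PrecX lt c (σ i) (σ j)) :
    AdmX lt σ (fun i => c (σ i)) := by
  constructor
  · intro i j hij
    rcases eq_or_lt_of_le hij with h | h
    · exact le_of_eq (by rw [h])
    · rcases hpr i j h with hlt | ⟨heq, -⟩
      · exact hlt.le
      · exact le_of_eq heq
  · intro j hj h
    obtain ⟨hj1, hj2⟩ := Finset.mem_sdiff.mp hj
    have hij : (⟨j, Nat.lt_of_succ_lt h⟩ : Fin n) < ⟨j + 1, h⟩ := by simp [Fin.lt_def]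
    rcases hpr _ _ hij with hlt | ⟨heq, hlt⟩
    · exact hlt
    · exact absurd (Finset.mem_filter.mpr
        ⟨Finset.mem_range.mpr (Nat.lt_of_succ_lt h), h, hlt⟩) hj2

end AuxCQS

/-- for any poset `P` on `[n]` with incomparability graph `G`,
`X_G(x;t) = ∑_{σ ∈ S_n} t^{inv_G σ} F_{n, [n-1] ∖ Des_P(σ)}(x_1,…,x_N)`. -/
theorem chromatic_qsym_fundamental_expansion (n N : ℕ) (hN : 1 ≤ N)
    (lt : Fin n → Fin n → Prop)
    (htrans : ∀ a b c, lt a b → lt b c → lt a c)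
    (hirrefl : ∀ a, ¬ lt a a) :
    chromIncQSym N n lt =
      ∑ σ : Equiv.Perm (Fin n),
        Polynomial.X ^ invInc lt σ *
          Polynomial.C (Fqs N n (Finset.range (n - 1) \ desPSet lt σ)) := by
  classical
  unfold chromIncQSym Fqs
  simp_rw [map_sum, Finset.mul_sum]
  rw [Finset.sum_sigma']
  refine Eq.symm (Finset.sum_nbij'
    (i := fun a : (Σ _ : Equiv.Perm (Fin n), Fin n → Fin N) => fun v => a.2 (a.1.symm v))
    (j := fun c => ⟨Tuple.sort (keyF lt c), fun i => c (Tuple.sort (keyF lt c) i)⟩)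
    ?_ ?_ ?_ ?_ ?_)
  · rintro ⟨σ, f⟩ ha
    obtain ⟨-, hfm⟩ := Finset.mem_sigma.mp ha
    have hf : AdmX lt σ f := (Finset.mem_filter.mp hfm).2
    exact Finset.mem_filter.mpr ⟨Finset.mem_univ _, admx_proper htrans hf⟩
  · intro c hc
    have hproper : ∀ a b, Incomp lt a b → c a ≠ c b := (Finset.mem_filter.mp hc).2
    have hsm : StrictMono (keyF lt c ∘ (Tuple.sort (keyF lt c))) :=
      (Tuple.monotone_sort (keyF lt c)).strictMono_of_injective
        ((key_inj htrans hirrefl hproper).comp (Tuple.sort (keyF lt c)).injective)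
    refine Finset.mem_sigma.mpr ⟨Finset.mem_univ _, Finset.mem_filter.mpr ⟨Finset.mem_univ _, ?_⟩⟩
    show AdmX lt (Tuple.sort (keyF lt c)) (fun i => c (Tuple.sort (keyF lt c) i))
    apply adm_of_prec
    intro i j hij
    exact prec_of_key_lt htrans hirrefl hproper
      (fun h => hij.ne ((Tuple.sort (keyF lt c)).injective h)) (hsm hij)
  · rintro ⟨σ, f⟩ ha
    obtain ⟨-, hfm⟩ := Finset.mem_sigma.mp ha
    have hf : AdmX lt σ f := (Finset.mem_filter.mp hfm).2
    have h1 : σ = Tuple.sort (keyF lt (fun v => f (σ.symm v))) :=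
      eq_sort_of_strictMono (admx_strictMono htrans hirrefl hf)
    beta_reduce
    rw [← h1]
    simp
  · intro c hc
    funext v
    simp
  · rintro ⟨σ, f⟩ ha
    obtain ⟨-, hfm⟩ := Finset.mem_sigma.mp ha
    have hf : AdmX lt σ f := (Finset.mem_filter.mp hfm).2
    simp only []
    rw [admx_asc htrans hf,
      Equiv.prod_comp σ.symm (fun i => (MvPolynomial.X (f i) : MvPolynomial (Fin N) ℤ))]
end
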